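/- arXiv:2307.04017 — 4 statements merged into one kernel-verified Lean document; each statement's English description precedes it below -/
import Mathlib

section
/- Let Ω be a compact subset of ℝ^d, let 𝒳 = {X(1),…,X(k)} be a collection of finite-dimensional linear subspaces of the space C(Ω) of continuous functions on Ω, and let ξ = {ξ¹,…,ξ^m} ⊂ Ω be a set of m points providing L∞-universal discretization for 𝒳 with constant D ≥ 1, i.e. ‖f‖_∞ ≤ D·max_{1≤j≤m} |f(ξ^j)| for every f ∈ ⋃_{n=1}^k X(n). Then for any f ∈ C(Ω) the following holds: for each n ∈ {1,…,k} the minimum over u ∈ X(n) of max_{1≤j≤m} |f(ξ^j) − u(ξ^j)| is attained, and if for each n one picks any minimizer u_n ∈ X(n), then min_{1≤n≤k} ‖f − u_n‖_∞ ≤ (2D + 1)·min_{1≤n≤k} d(f, X(n))_∞. -/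
noncomputable section
open scoped BigOperators

/-- Uniform norm of a continuous complex-valued function. -/
def unifNormC {α : Type*} [TopologicalSpace α] (f : C(α, ℂ)) : ℝ :=
  ⨆ x : α, ‖f x‖

/-- Best uniform approximation `d(f, X)_∞` of `f` by elements of the subspace `X`. -/
def distToSub {α : Type*} [TopologicalSpace α] (f : C(α, ℂ)) (X : Submodule ℂ C(α, ℂ)) : ℝ :=
  ⨅ u : X, unifNormC (f - (u : C(α, ℂ)))

lemma ciSup_abs_eq_pi_norm {m : ℕ} (hm : 0 < m) (g : Fin m → ℂ) :
    (⨆ j : Fin m, ‖g j‖) = ‖g‖ := by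
  haveI : Nonempty (Fin m) := ⟨⟨0, hm⟩⟩
  have hbdd : BddAbove (Set.range fun j : Fin m => ‖g j‖) :=
    (Set.finite_range _).bddAbove
  refine le_antisymm (ciSup_le fun j => ?_) ?_
  · simpa using norm_le_pi_norm g j
  · have h0 : (0 : ℝ) ≤ ⨆ j : Fin m, ‖g j‖ :=
      le_trans (norm_nonneg _) (le_ciSup hbdd (Classical.arbitrary _))
    rw [pi_norm_le_iff_of_nonneg h0]
    intro j
    simpa using le_ciSup hbdd j

/-- Lebesgue-type inequality for the universal recovery algorithm
`ℓ∞(ξ, 𝒳)` under `L∞`-universal discretization. -/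
theorem stmt0 {d k m : ℕ} (hk : 0 < k) (hm : 0 < m)
    (Ω : Set (Fin d → ℝ)) (hΩne : Ω.Nonempty) (hΩ : IsCompact Ω)
    (X : Fin k → Submodule ℂ C(Ω, ℂ))
    (hXfd : ∀ n, FiniteDimensional ℂ (X n))
    (ξ : Fin m → Ω) (D : ℝ) (hD : 1 ≤ D)
    (hud : ∀ n : Fin k, ∀ f ∈ X n,
      unifNormC f ≤ D * ⨆ j : Fin m, ‖f (ξ j)‖)
    (f : C(Ω, ℂ)) :
    (∀ n : Fin k, ∃ u ∈ X n, ∀ v ∈ X n,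
        (⨆ j : Fin m, ‖f (ξ j) - u (ξ j)‖) ≤
          ⨆ j : Fin m, ‖f (ξ j) - v (ξ j)‖) ∧
    (∀ u : Fin k → C(Ω, ℂ),
      (∀ n : Fin k, u n ∈ X n ∧ ∀ v ∈ X n,
        (⨆ j : Fin m, ‖f (ξ j) - (u n) (ξ j)‖) ≤
          ⨆ j : Fin m, ‖f (ξ j) - v (ξ j)‖) →
      (⨅ n : Fin k, unifNormC (f - u n)) ≤
        (2 * D + 1) * ⨅ n : Fin k, distToSub f (X n)) := by
  haveI : CompactSpace Ω := isCompact_iff_compactSpace.mp hΩ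
  haveI : Nonempty Ω := hΩne.to_subtype
  haveI : Nonempty (Fin m) := ⟨⟨0, hm⟩⟩
  haveI : Nonempty (Fin k) := ⟨⟨0, hk⟩⟩
  -- evaluation map
  set ev : C(Ω, ℂ) → (Fin m → ℂ) := fun g => fun j => g (ξ j) with hev
  have hunif : ∀ g : C(Ω, ℂ), unifNormC g = ‖g‖ := by
    intro g
    rw [unifNormC, ContinuousMap.norm_eq_iSup_norm]
  have hS : ∀ g : C(Ω, ℂ),
      (⨆ j : Fin m, ‖g (ξ j)‖) = ‖ev g‖ := by
    intro g
    exact ciSup_abs_eq_pi_norm hm (ev g)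
  have hSsub : ∀ g h : C(Ω, ℂ),
      (⨆ j : Fin m, ‖g (ξ j) - h (ξ j)‖) = ‖ev g - ev h‖ := by
    intro g h
    have := ciSup_abs_eq_pi_norm hm (ev g - ev h)
    simpa [hev] using this
  have hSle : ∀ g : C(Ω, ℂ), ‖ev g‖ ≤ ‖g‖ := by
    intro g
    rw [pi_norm_le_iff_of_nonneg (norm_nonneg g)]
    intro j
    exact ContinuousMap.norm_coe_le_norm g (ξ j)
  -- existence of minimizers
  have hexists : ∀ n : Fin k, ∃ u ∈ X n, ∀ v ∈ X n,
      (⨆ j : Fin m, ‖f (ξ j) - u (ξ j)‖) ≤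
        ⨆ j : Fin m, ‖f (ξ j) - v (ξ j)‖ := by
    intro n
    haveI := hXfd n
    let T : X n →ₗ[ℂ] (Fin m → ℂ) :=
      { toFun := fun v => ev (v : C(Ω, ℂ))
        map_add' := by intro a b; funext j; simp [hev]
        map_smul' := by intro c a; funext j; simp [hev] }
    let R := LinearMap.range T
    have hRclosed : IsClosed (R : Set (Fin m → ℂ)) :=
      R.closed_of_finiteDimensional
    obtain ⟨y, hyR, hy⟩ :=
      hRclosed.exists_infDist_eq_dist ⟨0, R.zero_mem⟩ (ev f)
    obtain ⟨v, rfl⟩ := hyR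
    refine ⟨(v : C(Ω, ℂ)), v.2, fun w hw => ?_⟩
    rw [hSsub f (v : C(Ω, ℂ)), hSsub f w]
    have h1 : ‖ev f - ev (v : C(Ω, ℂ))‖ = dist (ev f) (T v) := by
      rw [dist_eq_norm]; rfl
    have h2 : ‖ev f - ev w‖ = dist (ev f) (T ⟨w, hw⟩) := by
      rw [dist_eq_norm]; rfl
    rw [h1, h2, ← hy]
    exact Metric.infDist_le_dist_of_mem ⟨⟨w, hw⟩, rfl⟩
  refine ⟨hexists, fun u hu => ?_⟩
  -- key pointwise bound
  have key : ∀ n : Fin k, ‖f - u n‖ ≤ (2 * D + 1) * distToSub f (X n) := by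
    intro n
    obtain ⟨hun, hmin⟩ := hu n
    have hbd : ∀ v : X n, ‖f - u n‖ ≤ (2 * D + 1) * ‖f - (v : C(Ω, ℂ))‖ := by
      intro v
      have tri : ‖f - u n‖ ≤ ‖f - (v : C(Ω, ℂ))‖ + ‖(v : C(Ω, ℂ)) - u n‖ := by
        have : f - u n = (f - (v : C(Ω, ℂ))) + ((v : C(Ω, ℂ)) - u n) := by ring
        rw [this]; exact norm_add_le _ _
      have hmem : (v : C(Ω, ℂ)) - u n ∈ X n := sub_mem v.2 hun
      have hud' := hud n _ hmem
      rw [hunif] at hud'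
      have hSv : (⨆ j : Fin m, ‖((v : C(Ω, ℂ)) - u n) (ξ j)‖)
          = ‖ev (v : C(Ω, ℂ)) - ev (u n)‖ := by
        simpa using hSsub (v : C(Ω, ℂ)) (u n)
      rw [hSv] at hud'
      have tri2 : ‖ev (v : C(Ω, ℂ)) - ev (u n)‖ ≤
          ‖ev f - ev (v : C(Ω, ℂ))‖ + ‖ev f - ev (u n)‖ := by
        have : ev (v : C(Ω, ℂ)) - ev (u n) =
            -(ev f - ev (v : C(Ω, ℂ))) + (ev f - ev (u n)) := by ring
        rw [this]
        exact le_trans (norm_add_le _ _) (by rw [norm_neg])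
      have hm1 : ‖ev f - ev (u n)‖ ≤ ‖ev f - ev (v : C(Ω, ℂ))‖ := by
        have := hmin (v : C(Ω, ℂ)) v.2
        rwa [hSsub f (u n), hSsub f (v : C(Ω, ℂ))] at this
      have hfv : ‖ev f - ev (v : C(Ω, ℂ))‖ ≤ ‖f - (v : C(Ω, ℂ))‖ := by
        have : ev f - ev (v : C(Ω, ℂ)) = ev (f - (v : C(Ω, ℂ))) := by
          funext j; simp [hev]
        rw [this]; exact hSle _
      have hD0 : (0 : ℝ) ≤ D := le_trans zero_le_one hD
      calc ‖f - u n‖ ≤ ‖f - (v : C(Ω, ℂ))‖ + ‖(v : C(Ω, ℂ)) - u n‖ := tri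
        _ ≤ ‖f - (v : C(Ω, ℂ))‖ + D * ‖ev (v : C(Ω, ℂ)) - ev (u n)‖ := by
            linarith [hud']
        _ ≤ ‖f - (v : C(Ω, ℂ))‖ +
              D * (‖ev f - ev (v : C(Ω, ℂ))‖ + ‖ev f - ev (u n)‖) := by
            nlinarith [tri2]
        _ ≤ ‖f - (v : C(Ω, ℂ))‖ + D * (2 * ‖f - (v : C(Ω, ℂ))‖) := by
            nlinarith [hm1, hfv]
        _ = (2 * D + 1) * ‖f - (v : C(Ω, ℂ))‖ := by ring
    have hc : (0 : ℝ) < 2 * D + 1 := by linarith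
    haveI : Nonempty (X n) := ⟨0⟩
    have hinf : ‖f - u n‖ / (2 * D + 1) ≤ ⨅ v : X n, unifNormC (f - (v : C(Ω, ℂ))) := by
      refine le_ciInf fun v => ?_
      rw [hunif, div_le_iff₀ hc]
      calc ‖f - u n‖ ≤ (2 * D + 1) * ‖f - (v : C(Ω, ℂ))‖ := hbd v
        _ = ‖f - (v : C(Ω, ℂ))‖ * (2 * D + 1) := by ring
    rw [distToSub]
    rw [div_le_iff₀ hc] at hinf
    linarith [hinf]
  -- conclude via a minimizing index
  obtain ⟨n₀, hn₀⟩ := Finite.exists_min fun n : Fin k => distToSub f (X n)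
  have hBinf : (⨅ n : Fin k, distToSub f (X n)) = distToSub f (X n₀) := by
    refine le_antisymm (ciInf_le (Set.finite_range _).bddBelow n₀) (le_ciInf hn₀)
  have h1 : (⨅ n : Fin k, unifNormC (f - u n)) ≤ unifNormC (f - u n₀) :=
    ciInf_le (Set.finite_range _).bddBelow n₀
  rw [hBinf]
  calc (⨅ n : Fin k, unifNormC (f - u n)) ≤ unifNormC (f - u n₀) := h1
    _ = ‖f - u n₀‖ := hunif _
    _ ≤ (2 * D + 1) * distToSub f (X n₀) := key n₀
end
end

section
/- Let Ω be a compact subset of ℝ^d, let 𝒳 = {X(1),…,X(k)} be a collection of finite-dimensional linear subspaces of C(Ω), and suppose there exists a set ξ = {ξ¹,…,ξ^m} ⊂ Ω of m points providing L∞-universal discretization for 𝒳 with constant D ≥ 1, i.e. ‖f‖_∞ ≤ D·max_{1≤j≤m} |f(ξ^j)| for every f ∈ ⋃_{n=1}^k X(n). Then for any compact subset 𝐅 of C(Ω) there exists a set of m points η = {η¹,…,η^m} ⊂ Ω such that sup_{f∈𝐅} min_{1≤n≤k} ‖f − u_n(f)‖_∞ ≤ (2D + 1)·min_{1≤n≤k}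 d(𝐅, X(n))_∞, where for each f and n, u_n(f) is any element of X(n) minimizing max_{1≤j≤m} |f(η^j) − u(η^j)| over u ∈ X(n), and d(𝐅,Y)_∞ := sup_{f∈𝐅} inf_{y∈Y} ‖f − y‖_∞. -/
noncomputable section
open scoped BigOperators

lemma unifNormC_eq_norm {α : Type*} [TopologicalSpace α] [CompactSpace α] [Nonempty α]
    (f : C(α, ℂ)) : unifNormC f = ‖f‖ := by
  rw [ContinuousMap.norm_eq_iSup_norm]
  simp only [unifNormC]

/-- universal sampling recovery bound for function classes
(Theorem udT2). -/
theorem stmt1 {d k m : ℕ} (hk : 0 < k) (hm : 0 < m)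
    (Ω : Set (Fin d → ℝ)) (hΩne : Ω.Nonempty) (hΩ : IsCompact Ω)
    (X : Fin k → Submodule ℂ C(Ω, ℂ))
    (hXfd : ∀ n, FiniteDimensional ℂ (X n))
    (D : ℝ) (hD : 1 ≤ D)
    (hud : ∃ ξ : Fin m → Ω, ∀ n : Fin k, ∀ f ∈ X n,
      unifNormC f ≤ D * ⨆ j : Fin m, ‖f (ξ j)‖)
    (F : Set C(Ω, ℂ)) (hF : IsCompact F) :
    ∃ η : Fin m → Ω,
      ∀ u : C(Ω, ℂ) → Fin k → C(Ω, ℂ),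
        (∀ f ∈ F, ∀ n : Fin k, u f n ∈ X n ∧ ∀ v ∈ X n,
          (⨆ j : Fin m, ‖f (η j) - (u f n) (η j)‖) ≤
            ⨆ j : Fin m, ‖f (η j) - v (η j)‖) →
        (⨆ f : F, ⨅ n : Fin k, unifNormC ((f : C(Ω, ℂ)) - u f n)) ≤
          (2 * D + 1) * ⨅ n : Fin k, ⨆ f : F, distToSub (f : C(Ω, ℂ)) (X n) := by
  obtain ⟨ξ, hξ⟩ := hud
  haveI : CompactSpace Ω := isCompact_iff_compactSpace.mp hΩ
  haveI : Nonempty Ω := hΩne.to_subtype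
  haveI : Nonempty (Fin k) := ⟨⟨0, hk⟩⟩
  haveI : Nonempty (Fin m) := ⟨⟨0, hm⟩⟩
  have hco : (0:ℝ) ≤ 2 * D + 1 := by linarith
  refine ⟨ξ, fun u hu => ?_⟩
  rcases F.eq_empty_or_nonempty with rfl | hFne
  · haveI : IsEmpty (↥(∅ : Set C(Ω, ℂ))) := Set.isEmpty_coe_sort.mpr rfl
    simp [Real.iSup_of_isEmpty, ciInf_const]
  haveI : Nonempty F := hFne.to_subtype
  -- boundedness of F
  obtain ⟨C, hC⟩ := hF.isBounded.exists_norm_le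
  have hdnn : ∀ (g : C(Ω, ℂ)) (n : Fin k), 0 ≤ distToSub g (X n) := by
    intro g n
    refine le_ciInf fun v => ?_
    simp only [unifNormC_eq_norm]
    positivity
  have hdle : ∀ (g : C(Ω, ℂ)) (n : Fin k), distToSub g (X n) ≤ ‖g‖ := by
    intro g n
    have h0 : distToSub g (X n) ≤ unifNormC (g - ((0 : X n) : C(Ω, ℂ))) := by
      refine ciInf_le ⟨0, ?_⟩ (0 : X n)
      rintro y ⟨v, rfl⟩
      simp only [unifNormC_eq_norm]
      positivity
    simpa [unifNormC_eq_norm] using h0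
  have hbddS : ∀ n : Fin k,
      BddAbove (Set.range fun g : F => distToSub (g : C(Ω, ℂ)) (X n)) := by
    intro n
    refine ⟨C, ?_⟩
    rintro y ⟨g, rfl⟩
    exact (hdle g n).trans (hC g g.2)
  -- the key pointwise estimate
  have key : ∀ f ∈ F, ∀ n : Fin k,
      unifNormC (f - u f n) ≤ (2 * D + 1) * distToSub f (X n) := by
    intro f hf n
    obtain ⟨humem, hmin⟩ := hu f hf n
    have h2 : ∀ v ∈ X n, ‖f - u f n‖ ≤ (2 * D + 1) * ‖f - v‖ := by
      intro v hv
      have hbddj : ∀ g : Fin m → ℝ, BddAbove (Set.range g) := fun g =>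
        (Set.finite_range g).bddAbove
      have hsupfv : (⨆ j : Fin m, ‖f (ξ j) - v (ξ j)‖) ≤ ‖f - v‖ := by
        refine ciSup_le fun j => ?_
        have : ‖f (ξ j) - v (ξ j)‖ = ‖(f - v) (ξ j)‖ := by
          simp
        rw [this]
        exact (f - v).norm_coe_le_norm (ξ j)
      have hsupfu : (⨆ j : Fin m, ‖f (ξ j) - (u f n) (ξ j)‖) ≤ ‖f - v‖ :=
        (hmin v hv).trans hsupfv
      have hvu : ‖v - u f n‖ ≤ 2 * D * ‖f - v‖ := by
        have hmem : v - u f n ∈ X n := sub_mem hv humem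
        have h1 := hξ n _ hmem
        rw [unifNormC_eq_norm] at h1
        calc ‖v - u f n‖ ≤ D * ⨆ j : Fin m, ‖(v - u f n) (ξ j)‖ := h1
          _ ≤ D * ((⨆ j : Fin m, ‖f (ξ j) - v (ξ j)‖) +
              ⨆ j : Fin m, ‖f (ξ j) - (u f n) (ξ j)‖) := by
            have hD0 : (0:ℝ) ≤ D := by linarith
            refine mul_le_mul_of_nonneg_left (ciSup_le fun j => ?_) hD0
            have heq : ((v - u f n) : C(Ω, ℂ)) (ξ j)
                = -(f (ξ j) - v (ξ j)) + (f (ξ j) - (u f n) (ξ j)) := by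
              simp only [ContinuousMap.sub_apply]; ring
            calc ‖((v - u f n) : C(Ω, ℂ)) (ξ j)‖
                ≤ ‖f (ξ j) - v (ξ j)‖ +
                  ‖f (ξ j) - (u f n) (ξ j)‖ := by
                  rw [heq]
                  refine (norm_add_le _ _).trans (le_of_eq ?_)
                  rw [norm_neg]
              _ ≤ _ := add_le_add
                  (le_ciSup (f := fun j : Fin m => ‖f (ξ j) - v (ξ j)‖)
                    (hbddj _) j)
                  (le_ciSup (f := fun j : Fin m => ‖f (ξ j) - (u f n) (ξ j)‖)
                    (hbddj _) j)
          _ ≤ D * (‖f - v‖ + ‖f - v‖) := by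
            have hD0 : (0:ℝ) ≤ D := by linarith
            exact mul_le_mul_of_nonneg_left (add_le_add hsupfv hsupfu) hD0
          _ = 2 * D * ‖f - v‖ := by ring
      calc ‖f - u f n‖ = ‖(f - v) + (v - u f n)‖ := by ring_nf
        _ ≤ ‖f - v‖ + ‖v - u f n‖ := norm_add_le _ _
        _ ≤ ‖f - v‖ + 2 * D * ‖f - v‖ := by linarith
        _ = (2 * D + 1) * ‖f - v‖ := by ring
    rw [unifNormC_eq_norm]
    have h3 : ‖f - u f n‖ ≤ ⨅ v : X n, (2 * D + 1) * unifNormC (f - (v : C(Ω, ℂ))) :=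
      le_ciInf fun v => by rw [unifNormC_eq_norm]; exact h2 v v.2
    refine h3.trans (le_of_eq ?_)
    rw [distToSub, Real.mul_iInf_of_nonneg hco]
  -- assemble
  refine ciSup_le fun f => ?_
  set S : Fin k → ℝ := fun n => ⨆ g : F, distToSub (g : C(Ω, ℂ)) (X n) with hSdef
  obtain ⟨n₀, hn₀⟩ := exists_eq_ciInf_of_finite (f := S)
  have hbddI : BddBelow (Set.range fun n : Fin k => unifNormC ((f : C(Ω, ℂ)) - u f n)) :=
    (Set.finite_range _).bddBelow
  calc (⨅ n : Fin k, unifNormC ((f : C(Ω, ℂ)) - u f n))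
      ≤ unifNormC ((f : C(Ω, ℂ)) - u f n₀) := ciInf_le hbddI n₀
    _ ≤ (2 * D + 1) * distToSub (f : C(Ω, ℂ)) (X n₀) := key f f.2 n₀
    _ ≤ (2 * D + 1) * S n₀ :=
        mul_le_mul_of_nonneg_left (le_ciSup (hbddS n₀) f) hco
    _ = (2 * D + 1) * ⨅ n : Fin k, S n := by rw [hn₀]
end
end

section
/- There exists an absolute constant γ > 0 such that for any n > 2 and any N ∈ ℕ with N ≤ γ·b_n, every trigonometric polynomial f ∈ 𝒯(Γ(N,2)) satisfies b_n^{−1} Σ_{ν=1}^{b_n} f(2πν/b_n, 2π{ν b_{n−1}/b_n}) = (2π)^{−2} ∫_{𝕋²} f(x) dx. -/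
noncomputable section
open scoped BigOperators
open MeasureTheory

/-- The cube `[0, 2π]^d`, representing the torus `𝕋^d`. -/
def cube (d : ℕ) : Set (Fin d → ℝ) := Set.Icc 0 (fun _ => 2 * Real.pi)

/-- Uniform norm over the torus `𝕋^d = [0, 2π]^d`. -/
def unifNorm {d : ℕ} (f : (Fin d → ℝ) → ℂ) : ℝ :=
  ⨆ x : cube d, ‖f ↑x‖

/-- The exponential `e^{i(k,x)}`. -/
def expFun {d : ℕ} (k : Fin d → ℤ) : (Fin d → ℝ) → ℂ :=
  fun x => Complex.exp (Complex.I * ∑ j, (k j : ℂ) * (x j : ℂ))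

/-- `𝒯(Q)`: the space of trigonometric polynomials with frequencies in `Q`. -/
def trigSpace {d : ℕ} (Q : Finset (Fin d → ℤ)) : Submodule ℂ ((Fin d → ℝ) → ℂ) :=
  Submodule.span ℂ (expFun '' (Q : Set (Fin d → ℤ)))

/-- `R(s) = {k : |k_j| < 2^{s_j}}`. -/
def Rbox {d : ℕ} (s : Fin d → ℕ) : Finset (Fin d → ℤ) :=
  Fintype.piFinset fun j => Finset.Ioo (-(2 ^ (s j) : ℤ)) ((2 : ℤ) ^ (s j))

/-- Best uniform approximation `d(f, 𝒯(Q))_∞`. -/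
def distT {d : ℕ} (f : (Fin d → ℝ) → ℂ) (Q : Finset (Fin d → ℤ)) : ℝ :=
  ⨅ u : trigSpace Q, unifNorm (f - (u : (Fin d → ℝ) → ℂ))

/-- `2π`-periodicity in each variable. -/
def Periodic2Pi {d : ℕ} (f : (Fin d → ℝ) → ℂ) : Prop :=
  ∀ (x : Fin d → ℝ) (j : Fin d), f (x + (2 * Real.pi) • (Pi.single j 1 : Fin d → ℝ)) = f x

/-- The Fibonacci numbers `b_0 = b_1 = 1`, `b_n = b_{n-1} + b_{n-2}`. -/
def fibb : ℕ → ℕ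
  | 0 => 1
  | 1 => 1
  | n + 2 => fibb (n + 1) + fibb n

/-- The hyperbolic cross `Γ(N, d)`. -/
def hyperCross (d N : ℕ) : Finset (Fin d → ℤ) :=
  (Fintype.piFinset fun _ : Fin d => Finset.Icc (-(N : ℤ)) (N : ℤ)).filter
    fun k => (∏ j, max |k j| 1) ≤ (N : ℤ)

/-- The Fibonacci points `y^ν = (2πν/b_n, 2π{ν b_{n-1}/b_n})`. -/
def fibPoint (n ν : ℕ) : Fin 2 → ℝ :=
  ![2 * Real.pi * ν / fibb n, 2 * Real.pi * Int.fract ((↑(ν * fibb (n - 1)) : ℝ) / fibb n)]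

lemma fibb_add_two (n : ℕ) : fibb (n + 2) = fibb (n + 1) + fibb n := rfl

lemma fibb_eq_fib (n : ℕ) : fibb n = Nat.fib (n + 1) := by
  induction n using Nat.twoStepInduction with
  | zero => rfl
  | one => rfl
  | more n ih1 ih2 =>
    rw [fibb_add_two, ih1, ih2, show n+2+1 = n+1+2 from rfl]
    conv_rhs => rw [Nat.fib_add_two]
    exact Nat.add_comm _ _

lemma fibb_pos (n : ℕ) : 0 < fibb n := by
  rw [fibb_eq_fib]; exact Nat.fib_pos.2 (Nat.succ_pos n)

lemma fibb_mono : Monotone fibb := by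
  apply monotone_nat_of_le_succ
  intro n
  match n with
  | 0 => exact le_refl 1
  | m + 1 => rw [fibb_add_two]; exact Nat.le_add_right _ _

lemma fibb_add (a b : ℕ) : fibb (a + b) = Nat.fib a * Nat.fib b + fibb a * fibb b := by
  rw [fibb_eq_fib, fibb_eq_fib, fibb_eq_fib, Nat.fib_add]

lemma fibb_add_le (a b : ℕ) : fibb (a + b) ≤ 2 * (fibb a * fibb b) := by
  rw [fibb_add, two_mul]
  have h1 : Nat.fib a ≤ fibb a := by rw [fibb_eq_fib]; exact Nat.fib_mono (Nat.le_succ a)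
  have h2 : Nat.fib b ≤ fibb b := by rw [fibb_eq_fib]; exact Nat.fib_mono (Nat.le_succ b)
  exact Nat.add_le_add (Nat.mul_le_mul h1 h2) (le_refl _)

lemma le_fibb (n : ℕ) : n ≤ fibb n := by
  induction n using Nat.twoStepInduction with
  | zero => exact Nat.zero_le _
  | one => exact le_refl 1
  | more n ih1 ih2 =>
    rw [fibb_add_two]
    have := fibb_pos n
    omega

/-- Key identity: `fibb (m+i+1) ∣ fibb m * fibb (m+i) - (-1)^m * fibb i`. -/
lemma fibb_ident : ∀ m i : ℕ,
    (fibb (m + i + 1) : ℤ) ∣ (fibb m : ℤ) * fibb (m + i) - (-1) ^ m * fibb i := by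
  intro m
  induction m using Nat.twoStepInduction with
  | zero => intro i; simp [fibb]
  | one =>
    intro i
    have : (1 + i) + 1 = i + 2 := by ring
    rw [this]
    have : (fibb 1 : ℤ) * fibb (1 + i) - (-1) ^ 1 * fibb i = (fibb (i + 2) : ℤ) := by
      rw [fibb_add_two]
      push_cast [fibb, Nat.add_comm 1 i]
      ring
    rw [this]
  | more m ih1 ih2 =>
    intro i
    have e1 := ih1 (i + 2)
    have e2 := ih2 (i + 1)
    have hmod : m + (i + 2) + 1 = m + 2 + i + 1 := by ring
    have hmod2 : m + 1 + (i + 1) + 1 = m + 2 + i + 1 := by ring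
    rw [hmod] at e1; rw [hmod2] at e2
    have hsum := dvd_add e1 e2
    have : (fibb m : ℤ) * fibb (m + (i + 2)) - (-1) ^ m * fibb (i + 2) +
        ((fibb (m + 1) : ℤ) * fibb (m + 1 + (i + 1)) - (-1) ^ (m + 1) * fibb (i + 1)) =
        (fibb (m + 2) : ℤ) * fibb (m + 2 + i) - (-1) ^ (m + 2) * fibb i := by
    -- fibb (m+(i+2)) = fibb(m+1+(i+1)) = fibb(m+2+i)
      have ha : m + (i + 2) = m + 2 + i := by ring
      have hb : m + 1 + (i + 1) = m + 2 + i := by ring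
      rw [ha, hb, fibb_add_two m, fibb_add_two i]
      push_cast
      ring
    rwa [this] at hsum

/-- Best approximation lemma. -/
lemma fibb_best : ∀ j i : ℕ, 1 ≤ i → ∀ q p : ℤ, 1 ≤ q → q < fibb (j + 1) →
    (fibb i : ℤ) ≤ |q * fibb (i + j) - p * fibb (i + j + 1)| := by
  intro j
  induction j with
  | zero =>
    intro i _ q p hq1 hq2
    simp only [fibb] at hq2; omega
  | succ j ih =>
    intro i hi q p hq1 hq2
    rcases lt_or_ge q (fibb (j + 1)) with hlt | hge
    · have h := ih (i + 1) (by omega) q p hq1 hlt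
      have e : i + 1 + j = i + (j + 1) := by ring
      have e2 : i + 1 + j + 1 = i + (j + 1) + 1 := by ring
      rw [e] at h
      exact le_trans (by exact_mod_cast fibb_mono (Nat.le_succ i)) h
    · -- fibb (j+1) ≤ q < fibb (j+2)
      match j with
      | 0 =>
        -- q = 1 since fibb 1 = 1 ≤ q < fibb 2 = 2
        have hq : q = 1 := by simp [fibb] at hq2; omega
        subst hq
        obtain ⟨i', rfl⟩ : ∃ i', i = i' + 1 := ⟨i - 1, by omega⟩
        have hrec : (fibb (i' + 1 + 1 + 1) : ℤ) = fibb (i' + 1 + 1) + fibb (i' + 1) := by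
          have := fibb_add_two (i' + 1); push_cast [this]; ring
        have hmono : (fibb (i' + 1) : ℤ) ≤ fibb (i' + 1 + 1) := by
          exact_mod_cast fibb_mono (Nat.le_succ _)
        have hp0 : (0:ℤ) < fibb (i' + 1) := by exact_mod_cast fibb_pos _
        have hp1 : (0:ℤ) < fibb (i' + 1 + 1) := by exact_mod_cast fibb_pos _
        have hp2 : (0:ℤ) < fibb (i' + 1 + 1 + 1) := by exact_mod_cast fibb_pos _
        rcases le_or_gt p 0 with hp | hp
        · rw [abs_of_pos (by nlinarith)]; nlinarith
        · rw [abs_of_neg (by nlinarith)]; nlinarith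
      | j' + 1 =>
        -- main step, j = j'+1 ≥ 1
        obtain ⟨i', rfl⟩ : ∃ i', i = i' + 1 := ⟨i - 1, by omega⟩
        set J := j' + 1 with hJ
        -- q' = fibb (J+2) - q  ∈ [1, fibb J]
        have hq'ub : fibb (J + 1 + 1) - q ≤ (fibb J : ℤ) := by
          have h2 : fibb (J + 2) = fibb (J + 1) + fibb J := fibb_add_two J
          have h3 : fibb (J + 1 + 1) = fibb (J + 2) := rfl
          rw [h3]
          omega
        have hq'lb : 1 ≤ (fibb (J + 1 + 1) : ℤ) - q := by omega
        have hJlt : (fibb J : ℤ) < fibb (J + 1) := by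
          have h2 : fibb (J + 1) = fibb J + fibb j' := fibb_add_two j'
          have h3 := fibb_pos j'
          exact_mod_cast by omega
        -- identity with m = J + 2, i = i'
        have hid := fibb_ident (J + 2) i'
        obtain ⟨s, hs⟩ := hid
        -- hs : fibb (J+2) * fibb (J+2+i') - (-1)^(J+2) * fibb i' = fibb (J+2+i'+1) * s
        have hIH := ih (i' + 1 + 1) (by omega) (fibb (J + 1 + 1) - q) (s - p) hq'lb
          (lt_of_le_of_lt hq'ub hJlt)
        -- index juggling: (i'+2) + J = i' + 1 + (J+1), (i'+2)+J+1 = i'+1+(J+1)+1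
        have eA : i' + 1 + 1 + J = J + 2 + i' := by ring
        have eB : i' + 1 + 1 + J + 1 = J + 2 + i' + 1 := by ring
        rw [eA] at hIH
        -- the expression equality
        have hDD : (fibb (J + 1 + 1) - q) * (fibb (J + 2 + i') : ℤ) - (s - p) * fibb (J + 2 + i' + 1)
            = (-1) ^ (J + 2) * fibb i' -
              (q * fibb (J + 2 + i') - p * fibb (J + 2 + i' + 1)) := by
          have : ((fibb (J + 2) : ℤ)) * fibb (J + 2 + i') - (-1) ^ (J + 2) * fibb i'
              = fibb (J + 2 + i' + 1) * s := hs
          have h2 : (J + 1 + 1 : ℕ) = J + 2 := rfl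
          rw [h2]
          linarith [this]
        rw [hDD] at hIH
        -- index: goal has i'+1 + (J+1) = J + 2 + i'
        have eC : i' + 1 + (J + 1) = J + 2 + i' := by ring
        have eD : i' + 1 + (J + 1) + 1 = J + 2 + i' + 1 := by ring
        rw [eC]
        set D := q * (fibb (J + 2 + i') : ℤ) - p * fibb (J + 2 + i' + 1) with hD
        -- hIH : fibb (i'+2) ≤ |(-1)^(J+2) * fibb i' - D|
        have habs : |(-1:ℤ) ^ (J + 2) * fibb i' - D| ≤ fibb i' + |D| := by
          calc |(-1:ℤ) ^ (J + 2) * fibb i' - D| ≤ |(-1:ℤ) ^ (J + 2) * fibb i'| + |D| :=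
                abs_sub _ _
            _ = fibb i' + |D| := by
                rw [abs_mul, abs_pow, abs_neg, abs_one, one_pow, one_mul, abs_of_nonneg
                  (by positivity)]
        have hrec : (fibb (i' + 1 + 1) : ℤ) = fibb (i' + 1) + fibb i' := by
          have := fibb_add_two i'; push_cast [this]; ring
        have : (fibb (i' + 1) : ℤ) + fibb i' ≤ fibb i' + |D| := by
          rw [← hrec]; exact le_trans hIH habs
        omega

lemma keyNT (n : ℕ) (hn : 2 < n) (N : ℕ) (hN : 5 * N ≤ fibb n)
    (k₁ k₂ : ℤ) (hk : max |k₁| 1 * max |k₂| 1 ≤ (N : ℤ))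
    (hdvd : (fibb n : ℤ) ∣ k₁ + k₂ * fibb (n - 1)) : k₁ = 0 ∧ k₂ = 0 := by
  obtain ⟨m, rfl⟩ : ∃ m, n = m + 2 := ⟨n - 2, by omega⟩
  have hsub : m + 2 - 1 = m + 1 := rfl
  rw [hsub] at hdvd
  have hk₂ : k₂ = 0 := by
    by_contra hne
    set q : ℤ := |k₂| with hqdef
    have hq1 : 1 ≤ q := by
      have := abs_pos.2 hne; omega
    obtain ⟨p₀, hp₀⟩ := hdvd
    have hp : ∃ p : ℤ, |q * fibb (m + 1) - p * fibb (m + 2)| = |k₁| := by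
      rcases abs_cases k₂ with ⟨h1, _⟩ | ⟨h1, _⟩
      · refine ⟨p₀, ?_⟩
        have : q * (fibb (m + 1) : ℤ) - p₀ * fibb (m + 2) = -k₁ := by
          rw [hqdef, h1]; linarith [hp₀]
        rw [this, abs_neg]
      · refine ⟨-p₀, ?_⟩
        have : q * (fibb (m + 1) : ℤ) - (-p₀) * fibb (m + 2) = k₁ := by
          rw [hqdef, h1]; linarith [hp₀]
        rw [this]
    obtain ⟨p, hp⟩ := hp
    set qn : ℕ := q.toNat with hqn
    have hqcast : (qn : ℤ) = q := Int.toNat_of_nonneg (by omega)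
    have hqn1 : 1 ≤ qn := by omega
    have hqN : qn ≤ N := by
      have h1 : (1:ℤ) ≤ max |k₁| 1 := le_max_right _ _
      have h2 : q ≤ max |k₂| 1 := le_max_left _ _
      have : q ≤ (N:ℤ) := by nlinarith
      omega
    have hqlt : qn < fibb (m + 1) := by
      have h1 : fibb (m + 2) = fibb (m + 1) + fibb m := fibb_add_two m
      have h2 := fibb_pos (m + 1)
      have h3 : fibb m ≤ fibb (m + 1) := fibb_mono (by omega : m ≤ m + 1)
      omega
    set j : ℕ := Nat.findGreatest (fun j => fibb j ≤ qn) (m + 2) with hj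
    have hjspec : fibb j ≤ qn := Nat.findGreatest_spec (P := fun j => fibb j ≤ qn)
      (Nat.zero_le _) (show fibb 0 ≤ qn from hqn1)
    have hjlt : j < m + 1 := by
      by_contra h
      exact absurd (le_trans (fibb_mono (by omega : m + 1 ≤ j)) hjspec) (by omega)
    have hjgt : qn < fibb (j + 1) := by
      have := Nat.findGreatest_is_greatest (P := fun j => fibb j ≤ qn)
        (show j < j + 1 by omega) (by omega)
      omega
    obtain ⟨i, hi1, hij⟩ : ∃ i, 1 ≤ i ∧ i + j + 1 = m + 2 := ⟨m + 1 - j, by omega, by omega⟩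
    have hbest := fibb_best j i hi1 q p (by omega)
      (by rw [← hqcast]; exact_mod_cast hjgt)
    have e1 : i + j = m + 1 := by omega
    rw [e1] at hbest
    have hbest2 : (fibb i : ℤ) ≤ |k₁| := by rw [← hp]; exact hbest
    clear hbest
    have hbest := hbest2
    have hfi1 : (1:ℤ) ≤ fibb i := by exact_mod_cast fibb_pos i
    have hmax1 : max |k₁| 1 = |k₁| := max_eq_left (by omega)
    have hmax2 : max |k₂| 1 = q := max_eq_left hq1
    rw [hmax1, hmax2] at hk
    have hprod : (fibb i : ℤ) * fibb j ≤ N := by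
      have hfj : (fibb j : ℤ) ≤ q := by rw [← hqcast]; exact_mod_cast hjspec
      have hfj0 : (0:ℤ) ≤ fibb j := by positivity
      calc (fibb i : ℤ) * fibb j ≤ |k₁| * q := by
            apply mul_le_mul hbest hfj hfj0 (by omega)
        _ ≤ N := hk
    have hprodn : fibb i * fibb j ≤ N := by exact_mod_cast hprod
    have hbound : fibb (m + 2) ≤ 4 * (fibb i * fibb j) := by
      have h1 : fibb (m + 2) ≤ 2 * fibb (m + 1) := by
        have ha := fibb_add_two m
        have hb : fibb m ≤ fibb (m + 1) := fibb_mono (by omega : m ≤ m + 1)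
        omega
      have h2 : fibb (m + 1) ≤ 2 * (fibb i * fibb j) := by rw [← e1]; exact fibb_add_le i j
      omega
    have hpos : 1 ≤ fibb i * fibb j := Nat.one_le_iff_ne_zero.2 (by
      have := fibb_pos i; have := fibb_pos j; positivity)
    have hcon : 5 * (fibb i * fibb j) ≤ 4 * (fibb i * fibb j) :=
      calc 5 * (fibb i * fibb j) ≤ 5 * N := by omega
        _ ≤ fibb (m + 2) := hN
        _ ≤ 4 * (fibb i * fibb j) := hbound
    omega
  subst hk₂
  refine ⟨?_, rfl⟩
  by_contra hne
  simp only [zero_mul, add_zero] at hdvd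
  have h1 : (fibb (m + 2) : ℤ) ≤ |k₁| := Int.le_of_dvd (abs_pos.2 hne) ((dvd_abs _ _).2 hdvd)
  have h2 : |k₁| ≤ (N:ℤ) := by
    have : max |k₁| 1 = |k₁| := max_eq_left (by have := abs_pos.2 hne; omega)
    rw [this] at hk
    simp at hk
    omega
  have h3 : fibb (m + 2) ≤ N := by omega
  have := fibb_pos (m + 2)
  omega

lemma integral_exp_Icc (j : ℤ) :
    (∫ t in Set.Icc (0:ℝ) (2 * Real.pi), Complex.exp (Complex.I * ((j:ℂ) * (t:ℝ)))) =
      if j = 0 then ((2 * Real.pi : ℝ) : ℂ) else 0 := by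
  have h2 : (0:ℝ) ≤ 2 * Real.pi := by positivity
  rw [MeasureTheory.integral_Icc_eq_integral_Ioc, ← intervalIntegral.integral_of_le h2]
  by_cases hj : j = 0
  · subst hj
    simp
  · simp only [if_neg hj]
    have hc : (Complex.I * (j:ℂ)) ≠ 0 :=
      mul_ne_zero Complex.I_ne_zero (Int.cast_ne_zero.2 hj)
    simp_rw [← mul_assoc]
    rw [integral_exp_mul_complex hc]
    have e1 : Complex.I * (j:ℂ) * ((2 * Real.pi : ℝ):ℂ) = (j:ℂ) * (2 * (Real.pi:ℂ) * Complex.I) := by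
      push_cast; ring
    have e2 : Complex.I * (j:ℂ) * ((0:ℝ):ℂ) = 0 := by push_cast; ring
    rw [e1, e2, Complex.exp_int_mul_two_pi_mul_I, Complex.exp_zero, sub_self, zero_div]

lemma expFun_continuous {d : ℕ} (k : Fin d → ℤ) : Continuous (expFun k) := by
  apply Complex.continuous_exp.comp
  apply continuous_const.mul
  apply continuous_finset_sum
  intro j _
  exact continuous_const.mul (Complex.continuous_ofReal.comp (continuous_apply j))

lemma expFun_integrableOn (k : Fin 2 → ℤ) : IntegrableOn (expFun k) (cube 2) := by
  apply Continuous.integrableOn_Icc (expFun_continuous k)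

lemma integral_expFun (k : Fin 2 → ℤ) :
    (∫ x in cube 2, expFun k x) =
      (if k 0 = 0 then ((2 * Real.pi : ℝ):ℂ) else 0) *
        (if k 1 = 0 then ((2 * Real.pi : ℝ):ℂ) else 0) := by
  set e := MeasurableEquiv.piFinTwo (fun _ : Fin 2 => ℝ) with he
  set g : ℝ × ℝ → ℂ := fun y =>
    Complex.exp (Complex.I * ((k 0 : ℂ) * (y.1:ℝ))) *
      Complex.exp (Complex.I * ((k 1 : ℂ) * (y.2:ℝ))) with hg
  have hsplit : expFun k = fun x => g (e x) := by
    funext x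
    show Complex.exp _ = g (x 0, x 1)
    simp only [expFun, hg, Fin.sum_univ_two, ← Complex.exp_add]
    congr 1
    ring
  have hpre : cube 2 = e ⁻¹' (Set.Icc (0:ℝ) (2*Real.pi) ×ˢ Set.Icc (0:ℝ) (2*Real.pi)) := by
    ext x
    simp only [cube, Set.mem_Icc, Set.mem_preimage, Set.mem_prod, Pi.le_def]
    constructor
    · rintro ⟨h1, h2⟩
      exact ⟨⟨h1 0, h2 0⟩, ⟨h1 1, h2 1⟩⟩
    · rintro ⟨⟨a, b⟩, c, d⟩
      constructor
      · intro i; fin_cases i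
        · exact a
        · exact c
      · intro i; fin_cases i
        · exact b
        · exact d
  rw [hsplit, hpre,
    MeasurePreserving.setIntegral_preimage_emb
      (volume_preserving_piFinTwo (fun _ : Fin 2 => ℝ)) e.measurableEmbedding g _]
  have hps := MeasureTheory.setIntegral_prod_mul (μ := volume) (ν := volume)
    (fun u : ℝ => Complex.exp (Complex.I * ((k 0 : ℂ) * (u:ℝ))))
    (fun u : ℝ => Complex.exp (Complex.I * ((k 1 : ℂ) * (u:ℝ))))
    (Set.Icc (0:ℝ) (2*Real.pi)) (Set.Icc (0:ℝ) (2*Real.pi))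
  rw [integral_exp_Icc, integral_exp_Icc] at hps
  exact hps

lemma expFun_fibPoint (n : ℕ) (k : Fin 2 → ℤ) (ν : ℕ) :
    expFun k (fibPoint n ν) =
      Complex.exp ((ν:ℂ) * (2 * Real.pi * Complex.I *
        ((k 0 + k 1 * (fibb (n-1) : ℤ) : ℤ) : ℂ) / (fibb n : ℂ))) := by
  have hb : (fibb n : ℂ) ≠ 0 := Nat.cast_ne_zero.2 (fibb_pos n).ne'
  set t : ℝ := (↑(ν * fibb (n - 1)) : ℝ) / fibb n with ht
  have hfract : Int.fract t = t - ⌊t⌋ := (Int.self_sub_floor t).symm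
  simp only [expFun, fibPoint, Fin.sum_univ_two, Matrix.cons_val_zero, Matrix.cons_val_one,
    Matrix.head_cons, ← ht, hfract]
  rw [show Complex.I * ((k 0 : ℂ) * ((2 * Real.pi * ν / fibb n : ℝ):ℂ) +
        (k 1 : ℂ) * ((2 * Real.pi * (t - ⌊t⌋) : ℝ):ℂ)) =
      (ν:ℂ) * (2 * Real.pi * Complex.I *
        ((k 0 + k 1 * (fibb (n-1) : ℤ) : ℤ) : ℂ) / (fibb n : ℂ)) +
      ((-(k 1 * ⌊t⌋) : ℤ):ℂ) * (2 * (Real.pi:ℂ) * Complex.I) from ?_,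
    Complex.exp_add, Complex.exp_int_mul_two_pi_mul_I, mul_one]
  rw [ht]
  push_cast
  field_simp
  ring

lemma sum_exp_Icc (b : ℕ) (hb : 0 < b) (c : ℤ) :
    ∑ ν ∈ Finset.Icc 1 b, Complex.exp ((ν:ℂ) * (2 * Real.pi * Complex.I * (c:ℂ) / (b:ℂ))) =
      if (b:ℤ) ∣ c then (b:ℂ) else 0 := by
  have hbC : (b:ℂ) ≠ 0 := Nat.cast_ne_zero.2 hb.ne'
  set ω : ℂ := Complex.exp (2 * Real.pi * Complex.I * (c:ℂ) / (b:ℂ)) with hω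
  have hterm : ∀ ν : ℕ,
      Complex.exp ((ν:ℂ) * (2 * Real.pi * Complex.I * (c:ℂ) / (b:ℂ))) = ω ^ ν :=
    fun ν => by rw [hω, ← Complex.exp_nat_mul]
  simp_rw [hterm]
  by_cases hdvd : (b:ℤ) ∣ c
  · obtain ⟨d, hd⟩ := hdvd
    have hcd : (c:ℂ) = (b:ℂ) * (d:ℂ) := by exact_mod_cast congrArg (Int.cast : ℤ → ℂ) hd
    have hω1 : ω = 1 := by
      rw [hω, show 2 * Real.pi * Complex.I * (c:ℂ) / (b:ℂ) =
        (d:ℂ) * (2 * (Real.pi:ℂ) * Complex.I) from by rw [hcd]; field_simp,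
        Complex.exp_int_mul_two_pi_mul_I]
    rw [if_pos ⟨d, hd⟩]
    simp [hω1, Nat.card_Icc]
  · have h2πI : (2 * (Real.pi:ℂ) * Complex.I) ≠ 0 := by
      simp [Complex.I_ne_zero, Complex.ofReal_ne_zero, Real.pi_ne_zero]
    have hω1 : ω ≠ 1 := by
      intro h
      rw [hω, Complex.exp_eq_one_iff] at h
      obtain ⟨m, hm⟩ := h
      apply hdvd
      refine ⟨m, ?_⟩
      have hkey : (c:ℂ) = (b:ℂ) * (m:ℂ) := by
        field_simp at hm
        apply mul_left_cancel₀ h2πI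
        linear_combination (2 * (Real.pi:ℂ) * Complex.I) * hm
      exact_mod_cast hkey
    have hωb : ω ^ b = 1 := by
      rw [hω, ← Complex.exp_nat_mul,
        show (b:ℂ) * (2 * Real.pi * Complex.I * (c:ℂ) / (b:ℂ)) =
          (c:ℂ) * (2 * (Real.pi:ℂ) * Complex.I) from by field_simp,
        Complex.exp_int_mul_two_pi_mul_I]
    rw [if_neg hdvd, ← Finset.Ico_add_one_right_eq_Icc, geom_sum_Ico hω1 (by omega)]
    have : ω ^ (b + 1) = ω := by rw [pow_succ, hωb, one_mul]
    rw [this, pow_one, sub_self, zero_div]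

/-- the Fibonacci cubature formula is exact on the hyperbolic cross
`𝒯(Γ(N,2))` for `N ≤ γ·b_n` (Lemma AL1). -/
theorem stmt7 :
    ∃ γ : ℝ, 0 < γ ∧ ∀ n : ℕ, 2 < n → ∀ N : ℕ, (N : ℝ) ≤ γ * fibb n →
      ∀ f ∈ trigSpace (hyperCross 2 N),
        (fibb n : ℂ)⁻¹ * ∑ ν ∈ Finset.Icc 1 (fibb n), f (fibPoint n ν) =
          (((2 * Real.pi) ^ 2 : ℝ) : ℂ)⁻¹ * ∫ x in cube 2, f x := by
  refine ⟨1/5, by norm_num, ?_⟩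
  intro n hn N hNle f hf
  have hN5 : 5 * N ≤ fibb n := by
    have h5 : (5 * N : ℝ) ≤ fibb n := by
      rw [mul_comm]
      calc (N:ℝ) * 5 ≤ (1/5 * fibb n) * 5 := by
            apply mul_le_mul_of_nonneg_right hNle (by norm_num)
        _ = fibb n := by ring
    exact_mod_cast h5
  have hbpos : 0 < fibb n := fibb_pos n
  have hbC : (fibb n : ℂ) ≠ 0 := Nat.cast_ne_zero.2 hbpos.ne'
  have hπ : (Real.pi : ℝ) ≠ 0 := Real.pi_ne_zero
  -- prove (integrability ∧ equation) by span induction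
  suffices h : IntegrableOn f (cube 2) volume ∧
      (fibb n : ℂ)⁻¹ * ∑ ν ∈ Finset.Icc 1 (fibb n), f (fibPoint n ν) =
        (((2 * Real.pi) ^ 2 : ℝ) : ℂ)⁻¹ * ∫ x in cube 2, f x from h.2
  induction hf using Submodule.span_induction with
  | mem g hg =>
    obtain ⟨k, hk, rfl⟩ := hg
    refine ⟨expFun_integrableOn k, ?_⟩
    -- extract the hyperbolic cross conditions
    have hmem := hk
    rw [Finset.mem_coe, hyperCross, Finset.mem_filter] at hmem
    have hprod : max |k 0| 1 * max |k 1| 1 ≤ (N : ℤ) := by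
      have := hmem.2
      rwa [Fin.prod_univ_two] at this
    set c : ℤ := k 0 + k 1 * (fibb (n-1) : ℤ) with hc
    have hLHS : ∑ ν ∈ Finset.Icc 1 (fibb n), expFun k (fibPoint n ν) =
        if ((fibb n : ℤ)) ∣ c then ((fibb n : ℕ):ℂ) else 0 := by
      rw [← sum_exp_Icc (fibb n) hbpos c]
      exact Finset.sum_congr rfl fun ν _ => expFun_fibPoint n k ν
    rw [hLHS, integral_expFun k]
    by_cases hdvd : (fibb n : ℤ) ∣ c
    · obtain ⟨h1, h2⟩ := keyNT n hn N hN5 (k 0) (k 1) hprod hdvd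
      rw [if_pos hdvd, if_pos h1, if_pos h2]
      rw [inv_mul_cancel₀ hbC]
      rw [show (((2 * Real.pi : ℝ):ℂ)) * ((2 * Real.pi : ℝ):ℂ) = (((2 * Real.pi)^2 : ℝ) : ℂ) from
        by push_cast; ring]
      rw [inv_mul_cancel₀ (by
        simp only [ne_eq, Complex.ofReal_eq_zero]
        positivity)]
    · rw [if_neg hdvd]
      have hknz : ¬(k 0 = 0 ∧ k 1 = 0) := by
        rintro ⟨h1, h2⟩
        exact hdvd (by simp [hc, h1, h2])
      rw [mul_zero]
      by_cases h0 : k 0 = 0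
      · have h1 : k 1 ≠ 0 := fun h => hknz ⟨h0, h⟩
        rw [if_neg h1, mul_zero, mul_zero]
      · rw [if_neg h0, zero_mul, mul_zero]
  | zero =>
    refine ⟨integrableOn_zero, ?_⟩
    simp
  | add g₁ g₂ hg₁ hg₂ ih₁ ih₂ =>
    obtain ⟨int₁, eq₁⟩ := ih₁
    obtain ⟨int₂, eq₂⟩ := ih₂
    refine ⟨int₁.add int₂, ?_⟩
    have hsum : ∑ ν ∈ Finset.Icc 1 (fibb n), (g₁ + g₂) (fibPoint n ν) =
        (∑ ν ∈ Finset.Icc 1 (fibb n), g₁ (fibPoint n ν)) +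
          ∑ ν ∈ Finset.Icc 1 (fibb n), g₂ (fibPoint n ν) := by
      rw [← Finset.sum_add_distrib]
      rfl
    have hint : ∫ x in cube 2, (g₁ + g₂) x = (∫ x in cube 2, g₁ x) + ∫ x in cube 2, g₂ x := by
      simp only [Pi.add_apply]
      exact MeasureTheory.integral_add int₁ int₂
    rw [hsum, hint]
    linear_combination eq₁ + eq₂
  | smul a g hg ih =>
    obtain ⟨int₁, eq₁⟩ := ih
    refine ⟨int₁.smul a, ?_⟩
    have hsum : ∑ ν ∈ Finset.Icc 1 (fibb n), (a • g) (fibPoint n ν) =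
        a * ∑ ν ∈ Finset.Icc 1 (fibb n), g (fibPoint n ν) := by
      rw [Finset.mul_sum]
      rfl
    have hint : ∫ x in cube 2, (a • g) x = a * ∫ x in cube 2, g x := by
      simp only [Pi.smul_apply, smul_eq_mul]
      exact MeasureTheory.integral_const_mul a _
    rw [hsum, hint]
    linear_combination a * eq₁
end
end

section
/- Let γ > 0 be such that for all n > 2 and all N ≤ γ·b_n the Fibonacci cubature formula b_n^{−1} Σ_{ν=1}^{b_n} f(y^ν) equals (2π)^{−2} ∫_{𝕋²} f dx for every f ∈ 𝒯(Γ(N,2)); let n' be the largest natural number with 2^{n'} ≤ γ·b_n/9, and for s ∈ ℤ_+² define V_s(f) := b_n^{−1} Σ_{ν=1}^{b_n} f(y^ν) 𝒱_{2^s}(· − y^ν). Then for any continuous function f on 𝕋²: min_{s: s_1+s_2 = n'} ‖f − V_s(f)‖_∞ ≤ 10·min_{s: s_1+s_2 = n'} d(f, 𝒯(R(s)))_∞. -/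
noncomputable section
open scoped BigOperators
open MeasureTheory

/-- The Dirichlet kernel `𝒟_l`. -/
def dirichletK (l : ℕ) (x : ℝ) : ℂ :=
  ∑ k ∈ Finset.Icc (-(l : ℤ)) (l : ℤ), Complex.exp (Complex.I * (k : ℂ) * (x : ℂ))

/-- The de la Vallée Poussin kernel `𝒱_j`. -/
def vpK (j : ℕ) (x : ℝ) : ℂ := (j : ℂ)⁻¹ * ∑ l ∈ Finset.Ico j (2 * j), dirichletK l x

/-- The multivariate de la Vallée Poussin kernel `𝒱_{(j_1,…,j_d)}`. -/
def vpKd {d : ℕ} (j : Fin d → ℕ) (x : Fin d → ℝ) : ℂ := ∏ i, vpK (j i) (x i)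

/-- The sampling operator `V_s` associated with the Fibonacci points:
`V_s(f)(x) = b_n⁻¹ ∑_ν f(y^ν) 𝒱_{2^s}(x − y^ν)`. -/
def fibV (n : ℕ) (s : Fin 2 → ℕ) (f : (Fin 2 → ℝ) → ℂ) : (Fin 2 → ℝ) → ℂ :=
  fun x => (fibb n : ℂ)⁻¹ * ∑ ν ∈ Finset.Icc 1 (fibb n),
    f (fibPoint n ν) * vpKd (fun i => 2 ^ s i) (x - fibPoint n ν)


-- ===== Part 1 =====


def ek (k : ℤ) : ℝ → ℂ := fun u => Complex.exp (Complex.I * k * u)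

lemma ek_mul (k m : ℤ) (u : ℝ) : ek k u * ek m u = ek (k + m) u := by
  simp only [ek, ← Complex.exp_add]; congr 1; push_cast; ring

lemma ek_zero (u : ℝ) : ek 0 u = 1 := by simp [ek]

lemma ek_sub (k : ℤ) (x u : ℝ) : ek k (x - u) = ek k x * ek (-k) u := by
  simp only [ek, ← Complex.exp_add]; congr 1; push_cast; ring

lemma ek_cont (k : ℤ) : Continuous (ek k) := by
  unfold ek; continuity

lemma integral_ek (k : ℤ) :
    ∫ u in Set.Icc (0:ℝ) (2*Real.pi), ek k u = if k = 0 then ((2*Real.pi : ℝ):ℂ) else 0 := by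
  rw [MeasureTheory.integral_Icc_eq_integral_Ioc,
    ← intervalIntegral.integral_of_le (by positivity : (0:ℝ) ≤ 2*Real.pi)]
  split_ifs with h
  · subst h
    simp only [ek, Int.cast_zero, mul_zero, zero_mul, Complex.exp_zero]
    simp
  · have hc : (Complex.I * k) ≠ 0 := by
      simp [Complex.I_ne_zero, Complex.ext_iff]
      exact_mod_cast h
    have : ∀ u : ℝ, ek k u = Complex.exp ((Complex.I * k) * u) := by
      intro u; rw [ek, mul_assoc]
    simp_rw [this]
    rw [integral_exp_mul_complex hc]
    rw [show (Complex.I * (k:ℂ) * ((2*Real.pi:ℝ):ℂ)) = ((k:ℤ):ℂ) * (2*Real.pi*Complex.I) by push_cast; ring]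
    rw [Complex.exp_int_mul_two_pi_mul_I]
    simp

lemma integral_cube_prod (g : Fin 2 → ℝ → ℂ) :
    ∫ x in cube 2, ∏ i, g i (x i) = ∏ i, ∫ u in Set.Icc (0:ℝ) (2*Real.pi), g i u := by
  have hmeas : MeasurableSet (cube 2) := measurableSet_Icc
  rw [← MeasureTheory.integral_indicator hmeas]
  have key : ∀ x : Fin 2 → ℝ, (cube 2).indicator (fun x => ∏ i, g i (x i)) x
      = ∏ i, (Set.Icc (0:ℝ) (2*Real.pi)).indicator (g i) (x i) := by
    intro x
    by_cases hx : x ∈ cube 2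
    · rw [Set.indicator_of_mem hx]
      refine Finset.prod_congr rfl fun i _ => ?_
      rw [Set.indicator_of_mem]
      exact ⟨by simpa using hx.1 i, by simpa using hx.2 i⟩
    · rw [Set.indicator_of_notMem hx]
      have : ∃ i, x i ∉ Set.Icc (0:ℝ) (2*Real.pi) := by
        by_contra h; push_neg at h
        exact hx ⟨fun i => (h i).1, fun i => (h i).2⟩
      obtain ⟨i, hi⟩ := this
      exact (Finset.prod_eq_zero (Finset.mem_univ i) (Set.indicator_of_notMem hi _)).symm
  simp_rw [key]
  rw [MeasureTheory.integral_fintype_prod_volume_eq_prod (ι := Fin 2)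
    (f := fun i u => (Set.Icc (0:ℝ) (2*Real.pi)).indicator (g i) u)]
  exact Finset.prod_congr rfl fun i _ => MeasureTheory.integral_indicator measurableSet_Icc

-- ===== Part 2 =====


def IsPoly1 (M : ℕ) (g : ℝ → ℂ) : Prop :=
  ∃ c : ℤ → ℂ, (∀ k, k ∉ Finset.Icc (-(M:ℤ)) M → c k = 0) ∧
    ∀ u, g u = ∑ k ∈ Finset.Icc (-(M:ℤ)) M, c k * ek k u

lemma sum_neg_Icc (M : ℕ) (F : ℤ → ℂ) :
    ∑ k ∈ Finset.Icc (-(M:ℤ)) M, F k = ∑ k ∈ Finset.Icc (-(M:ℤ)) M, F (-k) := by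
  refine Finset.sum_nbij' (fun k => -k) (fun k => -k) ?_ ?_ ?_ ?_ ?_
  · intro a ha; simp only [Finset.mem_Icc] at *; omega
  · intro a ha; simp only [Finset.mem_Icc] at *; omega
  · intro a _; omega
  · intro a _; omega
  · intro a _; rw [neg_neg]

lemma IsPoly1.mono {M M' : ℕ} {g : ℝ → ℂ} (h : IsPoly1 M g) (hMM : M ≤ M') : IsPoly1 M' g := by
  obtain ⟨c, hc0, hc⟩ := h
  refine ⟨c, fun k hk => hc0 k ?_, fun u => ?_⟩
  · simp only [Finset.mem_Icc] at *; omega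
  · rw [hc u]
    refine Finset.sum_subset ?_ ?_
    · intro k; simp only [Finset.mem_Icc]; omega
    · intro k _ hk; rw [hc0 k hk, zero_mul]

lemma IsPoly1.add {M : ℕ} {g h : ℝ → ℂ} (hg : IsPoly1 M g) (hh : IsPoly1 M h) :
    IsPoly1 M (fun u => g u + h u) := by
  obtain ⟨c, hc0, hc⟩ := hg; obtain ⟨d, hd0, hd⟩ := hh
  refine ⟨fun k => c k + d k, fun k hk => ?_, fun u => ?_⟩
  · dsimp only; rw [hc0 k hk, hd0 k hk, add_zero]
  · dsimp only; simp_rw [hc u, hd u, add_mul, Finset.sum_add_distrib]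

lemma IsPoly1.constMul {M : ℕ} {g : ℝ → ℂ} (a : ℂ) (hg : IsPoly1 M g) :
    IsPoly1 M (fun u => a * g u) := by
  obtain ⟨c, hc0, hc⟩ := hg
  refine ⟨fun k => a * c k, fun k hk => ?_, fun u => ?_⟩
  · dsimp only; rw [hc0 k hk, mul_zero]
  · dsimp only; rw [hc u, Finset.mul_sum]; simp_rw [mul_assoc]

lemma isPoly1_dirichletK (l M : ℕ) (hlM : l ≤ M) :
    IsPoly1 M (fun x => ∑ k ∈ Finset.Icc (-(l : ℤ)) (l : ℤ), Complex.exp (Complex.I * (k : ℂ) * (x : ℂ))) := by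
  refine IsPoly1.mono ?_ hlM
  refine ⟨fun k => if k ∈ Finset.Icc (-(l:ℤ)) l then 1 else 0, fun k hk => if_neg hk, fun u => ?_⟩
  refine Finset.sum_congr rfl fun k hk => ?_
  dsimp only; rw [if_pos hk, one_mul]; rfl

lemma IsPoly1.reflect {M : ℕ} {g : ℝ → ℂ} (hg : IsPoly1 M g) (x : ℝ) :
    IsPoly1 M (fun u => g (x - u)) := by
  obtain ⟨c, hc0, hc⟩ := hg
  refine ⟨fun q => c (-q) * ek (-q) x, fun q hq => ?_, fun u => ?_⟩
  · dsimp only; rw [hc0 (-q) (by simp only [Finset.mem_Icc] at *; omega), zero_mul]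
  · dsimp only; rw [hc (x - u), sum_neg_Icc M (fun k => c k * ek k (x - u))]
    refine Finset.sum_congr rfl fun q _ => ?_
    rw [ek_sub, neg_neg]; ring

lemma IsPoly1.mulEk {M K : ℕ} {g : ℝ → ℂ} (hg : IsPoly1 M g) {k : ℤ}
    (hk : k ∈ Finset.Icc (-(K:ℤ)) K) :
    IsPoly1 (K + M) (fun u => ek k u * g u) := by
  obtain ⟨c, hc0, hc⟩ := hg
  simp only [Finset.mem_Icc] at hk
  refine ⟨fun q => c (q - k), fun q hq => ?_, fun u => ?_⟩
  · dsimp only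
    refine hc0 _ ?_
    simp only [Finset.mem_Icc] at *; push_cast at hq; omega
  · dsimp only
    have h1 : ∑ q ∈ Finset.Icc (-((K+M:ℕ):ℤ)) ((K+M:ℕ):ℤ), c (q - k) * ek q u
        = ∑ q ∈ Finset.Icc (k - M) (k + M), c (q - k) * ek q u := by
      refine (Finset.sum_subset ?_ ?_).symm
      · intro q; simp only [Finset.mem_Icc]; push_cast; omega
      · intro q _ hq
        rw [hc0 (q - k) (by simp only [Finset.mem_Icc] at *; omega), zero_mul]
    have h2 : ∑ q ∈ Finset.Icc (k - M) (k + M), c (q - k) * ek q u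
        = ∑ m ∈ Finset.Icc (-(M:ℤ)) M, c m * ek (k + m) u := by
      refine Finset.sum_nbij' (fun q => q - k) (fun m => k + m) ?_ ?_ ?_ ?_ ?_
      · intro a ha; simp only [Finset.mem_Icc] at *; omega
      · intro a ha; simp only [Finset.mem_Icc] at *; omega
      · intro a _; omega
      · intro a _; omega
      · intro a _
        rw [show k + (a - k) = a by ring]
    rw [hc u, Finset.mul_sum, h1, h2]
    refine Finset.sum_congr rfl fun m _ => ?_
    rw [← ek_mul k m u]; ring

lemma IsPoly1.continuous {M : ℕ} {g : ℝ → ℂ} (hg : IsPoly1 M g) : Continuous g := by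
  obtain ⟨c, _, hc⟩ := hg
  rw [funext hc]
  refine continuous_finset_sum _ fun k _ => Continuous.mul continuous_const ?_
  unfold ek; continuity

-- ===== Part 3 =====


lemma dirichletK_eq (l : ℕ) (x : ℝ) : dirichletK l x = ∑ k ∈ Finset.Icc (-(l : ℤ)) (l : ℤ), ek k x := rfl

def fejC (m : ℕ) (u : ℝ) : ℂ := ∑ l ∈ Finset.range (m+1), dirichletK l u

lemma conj_ek (p : ℤ) (u : ℝ) : (starRingEnd ℂ) (ek p u) = ek (-p) u := by
  rw [ek, ← Complex.exp_conj]
  congr 1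
  simp only [map_mul, Complex.conj_I, map_intCast, Complex.conj_ofReal]
  push_cast
  ring

lemma fejC_eq_mul_conj (m : ℕ) (u : ℝ) :
    fejC m u = (∑ p ∈ Finset.range (m+1), ek (p:ℤ) u) *
      (starRingEnd ℂ) (∑ p ∈ Finset.range (m+1), ek (p:ℤ) u) := by
  induction m with
  | zero =>
    simp only [fejC, Finset.range_one, Finset.sum_singleton, dirichletK_eq]
    norm_num [ek_zero]
  | succ m ih =>
    have hS : ∑ p ∈ Finset.range (m+1+1), ek (p:ℤ) u
        = (∑ p ∈ Finset.range (m+1), ek (p:ℤ) u) + ek ((m:ℤ)+1) u := by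
      rw [Finset.sum_range_succ]; push_cast; ring_nf
    have hF : fejC (m+1) u = fejC m u + dirichletK (m+1) u := by
      rw [fejC, Finset.sum_range_succ]; rfl
    rw [hF, ih, hS, map_add, conj_ek]
    rw [mul_add, add_mul, add_mul]
    rw [map_sum]
    simp_rw [conj_ek]
    have e1 : ek ((m:ℤ)+1) u * ek (-((m:ℤ)+1)) u = 1 := by
      rw [ek_mul, show (m:ℤ)+1 + -((m:ℤ)+1) = 0 by ring, ek_zero]
    have e2 : ek ((m:ℤ)+1) u * (∑ p ∈ Finset.range (m+1), ek (-(p:ℤ)) u)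
        = ∑ k ∈ Finset.Icc (1:ℤ) ((m:ℤ)+1), ek k u := by
      rw [Finset.mul_sum]
      simp_rw [ek_mul]
      refine Finset.sum_nbij' (fun p => (m:ℤ) + 1 - p) (fun k => (m + 1 - k).toNat) ?_ ?_ ?_ ?_ ?_
      · intro a ha; simp only [Finset.mem_range, Finset.mem_Icc] at *; omega
      · intro a ha; simp only [Finset.mem_range, Finset.mem_Icc] at *; omega
      · intro a ha; simp only [Finset.mem_range] at ha; omega
      · intro a ha; simp only [Finset.mem_Icc] at ha; omega
      · intro a ha; simp only [Finset.mem_range] at ha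
        congr 1
    have e3 : (∑ p ∈ Finset.range (m+1), ek (p:ℤ) u) * ek (-((m:ℤ)+1)) u
        = ∑ k ∈ Finset.Icc (-((m:ℤ)+1)) (-1), ek k u := by
      rw [Finset.sum_mul]
      simp_rw [ek_mul]
      refine Finset.sum_nbij' (fun p => (p:ℤ) - ((m:ℤ)+1)) (fun k => (k + (m + 1)).toNat) ?_ ?_ ?_ ?_ ?_
      · intro a ha; simp only [Finset.mem_range, Finset.mem_Icc] at *; omega
      · intro a ha; simp only [Finset.mem_range, Finset.mem_Icc] at *; omega
      · intro a ha; simp only [Finset.mem_range] at ha; omega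
      · intro a ha; simp only [Finset.mem_Icc] at ha; omega
      · intro a ha; simp only [Finset.mem_range] at ha
        congr 1
    have e4 : dirichletK (m+1) u = ek 0 u + (∑ k ∈ Finset.Icc (1:ℤ) ((m:ℤ)+1), ek k u)
        + ∑ k ∈ Finset.Icc (-((m:ℤ)+1)) (-1), ek k u := by
      rw [dirichletK_eq]
      have hsplit : Finset.Icc (-((m+1:ℕ):ℤ)) ((m+1:ℕ):ℤ)
          = (Finset.Icc (-((m:ℤ)+1)) (-1)) ∪ (Finset.Icc (0:ℤ) ((m:ℤ)+1)) := by
        ext k; simp only [Finset.mem_union, Finset.mem_Icc]; push_cast; omega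
      have hdisj : Disjoint (Finset.Icc (-((m:ℤ)+1)) (-1)) (Finset.Icc (0:ℤ) ((m:ℤ)+1)) := by
        rw [Finset.disjoint_left]
        intro a ha ha'
        simp only [Finset.mem_Icc] at ha ha'
        omega
      rw [hsplit, Finset.sum_union hdisj]
      have h0 : Finset.Icc (0:ℤ) ((m:ℤ)+1) = insert (0:ℤ) (Finset.Icc (1:ℤ) ((m:ℤ)+1)) := by
        ext k; simp only [Finset.mem_insert, Finset.mem_Icc]; omega
      rw [h0, Finset.sum_insert (by simp only [Finset.mem_Icc]; omega)]
      ring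
    rw [e1, e2, e3, e4, ek_zero]
    ring

-- ===== Part 4: Fejér positivity, vpK representation, integrals =====

def fejR (m : ℕ) (u : ℝ) : ℝ := Complex.normSq (∑ p ∈ Finset.range (m+1), ek (p:ℤ) u)

lemma fejC_eq_ofReal (m : ℕ) (u : ℝ) : fejC m u = ((fejR m u : ℝ) : ℂ) := by
  rw [fejC_eq_mul_conj, Complex.mul_conj, fejR]

lemma fejR_nonneg (m : ℕ) (u : ℝ) : 0 ≤ fejR m u := Complex.normSq_nonneg _

lemma isPoly1_zero (M : ℕ) : IsPoly1 M (fun _ => 0) :=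
  ⟨fun _ => 0, fun _ _ => rfl, by simp⟩

lemma isPoly1_finsum {ι : Type*} (M : ℕ) (A : Finset ι) (g : ι → ℝ → ℂ)
    (h : ∀ a ∈ A, IsPoly1 M (g a)) : IsPoly1 M (fun u => ∑ a ∈ A, g a u) := by
  induction A using Finset.cons_induction with
  | empty => simpa using isPoly1_zero M
  | cons a A ha ih =>
    simp_rw [Finset.sum_cons]
    exact (h a (Finset.mem_cons_self a A)).add (ih fun b hb => h b (Finset.mem_cons.mpr (Or.inr hb)))

lemma isPoly1_fejC (m : ℕ) : IsPoly1 m (fejC m) := by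
  have h : fejC m = fun u => ∑ l ∈ Finset.range (m+1), dirichletK l u := rfl
  rw [h]
  refine isPoly1_finsum m _ _ (fun l hl => ?_)
  have hl' : l ≤ m := by simp only [Finset.mem_range] at hl; omega
  exact isPoly1_dirichletK l m hl'

def wcoef (j : ℕ) (k : ℤ) : ℂ :=
  (j:ℂ)⁻¹ * (((Finset.Ico j (2*j)).filter (fun l : ℕ => -(l:ℤ) ≤ k ∧ k ≤ (l:ℤ))).card : ℂ)

lemma vpK_rep (j : ℕ) (v : ℝ) :
    vpK j v = ∑ k ∈ Finset.Icc (-((2*j-1:ℕ):ℤ)) ((2*j-1:ℕ):ℤ), wcoef j k * ek k v := by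
  rw [vpK]
  have hD : ∀ l ∈ Finset.Ico j (2*j), dirichletK l v
      = ∑ k ∈ Finset.Icc (-((2*j-1:ℕ):ℤ)) ((2*j-1:ℕ):ℤ),
          if -(l:ℤ) ≤ k ∧ k ≤ (l:ℤ) then ek k v else 0 := by
    intro l hl
    simp only [Finset.mem_Ico] at hl
    rw [dirichletK_eq, ← Finset.sum_filter]
    congr 1
    ext k
    simp only [Finset.mem_filter, Finset.mem_Icc]
    omega
  rw [Finset.sum_congr rfl hD, Finset.sum_comm, Finset.mul_sum]
  refine Finset.sum_congr rfl fun k _ => ?_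
  rw [← Finset.sum_filter, Finset.sum_const, nsmul_eq_mul, wcoef]
  ring

lemma wcoef_one {j : ℕ} {k : ℤ} (hk1 : -(j:ℤ) < k) (hk2 : k < (j:ℤ)) : wcoef j k = 1 := by
  have hj : 0 < j := by omega
  rw [wcoef, Finset.filter_true_of_mem, Nat.card_Ico]
  · have h2 : (2*j - j) = j := by omega
    rw [h2]
    have : (j:ℂ) ≠ 0 := Nat.cast_ne_zero.mpr hj.ne'
    field_simp
  · intro l hl
    simp only [Finset.mem_Ico] at hl
    omega

lemma isPoly1_vpK (j : ℕ) : IsPoly1 (2*j-1) (vpK j) := by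
  refine ⟨wcoef j, fun k hk => ?_, vpK_rep j⟩
  simp only [Finset.mem_Icc] at hk
  rw [wcoef]
  have hemp : (Finset.Ico j (2*j)).filter (fun l : ℕ => -(l:ℤ) ≤ k ∧ k ≤ (l:ℤ)) = ∅ := by
    rw [Finset.filter_eq_empty_iff]
    intro l hl
    simp only [Finset.mem_Ico] at hl
    omega
  rw [hemp]
  simp

lemma integral_rep (M : ℕ) (c : ℤ → ℂ) :
    ∫ u in Set.Icc (0:ℝ) (2*Real.pi), ∑ k ∈ Finset.Icc (-(M:ℤ)) M, c k * ek k u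
      = 2*Real.pi * c 0 := by
  rw [MeasureTheory.integral_finset_sum _
    (fun k _ => (show Continuous (fun u => c k * ek k u) from continuous_const.mul (ek_cont k)).integrableOn_Icc)]
  simp_rw [MeasureTheory.integral_const_mul, integral_ek]
  rw [Finset.sum_eq_single (0:ℤ)]
  · simp; ring
  · intro b _ hb; simp [hb]
  · intro h; exact absurd (by simp only [Finset.mem_Icc]; omega) h

lemma integral_ek_mul_rep (M : ℕ) (c : ℤ → ℂ) (k : ℤ) (hk : k ∈ Finset.Icc (-(M:ℤ)) M) :
    ∫ u in Set.Icc (0:ℝ) (2*Real.pi), ek k u * ∑ m ∈ Finset.Icc (-(M:ℤ)) M, c m * ek m u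
      = 2*Real.pi * c (-k) := by
  have hpt : ∀ u : ℝ, ek k u * ∑ m ∈ Finset.Icc (-(M:ℤ)) M, c m * ek m u
      = ∑ m ∈ Finset.Icc (-(M:ℤ)) M, c m * ek (k+m) u := by
    intro u
    rw [Finset.mul_sum]
    refine Finset.sum_congr rfl fun m _ => ?_
    rw [← ek_mul k m u]; ring
  simp_rw [hpt]
  rw [MeasureTheory.integral_finset_sum _
    (fun m _ => (show Continuous (fun u => c m * ek (k+m) u) from continuous_const.mul (ek_cont (k+m))).integrableOn_Icc)]
  simp_rw [MeasureTheory.integral_const_mul, integral_ek]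
  rw [Finset.sum_eq_single (-k)]
  · simp; ring
  · intro b _ hb
    have hne : ¬(k + b = 0) := by omega
    simp [hne]
  · intro h
    simp only [Finset.mem_Icc] at *
    omega

-- ===== Part 5: membership in trigSpace and cubature transfer =====

lemma expFun_eq_prod (k : Fin 2 → ℤ) (y : Fin 2 → ℝ) :
    expFun k y = ek (k 0) (y 0) * ek (k 1) (y 1) := by
  rw [expFun, Fin.sum_univ_two, ek, ek, ← Complex.exp_add]
  congr 1; push_cast; ring

lemma mem_trigSpace_of_sep {N : ℕ} (m : Fin 2 → ℕ) (g : Fin 2 → ℝ → ℂ)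
    (hg : ∀ i, IsPoly1 (m i) (g i))
    (hN1 : ∀ i, m i ≤ N)
    (hN2 : (max (m 0) 1) * (max (m 1) 1) ≤ N) :
    (fun y : Fin 2 → ℝ => ∏ i, g i (y i)) ∈ trigSpace (hyperCross 2 N) := by
  obtain ⟨c0, hc00, hc0⟩ := hg 0
  obtain ⟨c1, hc10, hc1⟩ := hg 1
  have hfun : (fun y : Fin 2 → ℝ => ∏ i, g i (y i))
      = ∑ k0 ∈ Finset.Icc (-(m 0:ℤ)) (m 0), ∑ k1 ∈ Finset.Icc (-(m 1:ℤ)) (m 1),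
          (c0 k0 * c1 k1) • expFun ![k0, k1] := by
    funext y
    simp only [Finset.sum_apply, Pi.smul_apply, smul_eq_mul]
    rw [Fin.prod_univ_two, hc0 (y 0), hc1 (y 1), Finset.sum_mul_sum]
    refine Finset.sum_congr rfl fun k0 _ => Finset.sum_congr rfl fun k1 _ => ?_
    rw [expFun_eq_prod]
    simp only [Matrix.cons_val_zero, Matrix.cons_val_one, Matrix.head_cons]
    ring
  rw [hfun]
  refine Submodule.sum_mem _ fun k0 hk0 => Submodule.sum_mem _ fun k1 hk1 =>
    Submodule.smul_mem _ _ (Submodule.subset_span ?_)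
  refine Set.mem_image_of_mem _ ?_
  simp only [Finset.mem_Icc] at hk0 hk1
  simp only [Finset.mem_coe, hyperCross, Finset.mem_filter, Fintype.mem_piFinset]
  have h00 := hN1 0
  have h11 := hN1 1
  constructor
  · intro j
    fin_cases j <;>
      simp only [Finset.mem_Icc, Matrix.cons_val_zero, Matrix.cons_val_one,
        Matrix.head_cons, Matrix.cons_val_fin_one, Fin.mk_zero, Fin.mk_one, Fin.isValue] <;>
      omega
  · rw [Fin.prod_univ_two]
    simp only [Matrix.cons_val_zero, Matrix.cons_val_one, Matrix.head_cons]
    have h0 : max |k0| 1 ≤ max ((m 0 : ℤ)) 1 :=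
      max_le_max (abs_le.mpr ⟨hk0.1, hk0.2⟩) le_rfl
    have h1 : max |k1| 1 ≤ max ((m 1 : ℤ)) 1 :=
      max_le_max (abs_le.mpr ⟨hk1.1, hk1.2⟩) le_rfl
    calc max |k0| 1 * max |k1| 1 ≤ max ((m 0 : ℤ)) 1 * max ((m 1 : ℤ)) 1 := by
          refine mul_le_mul h0 h1 ?_ ?_ <;> positivity
      _ ≤ (N : ℤ) := by
          have e0 : max ((m 0 : ℤ)) 1 = ((max (m 0) 1 : ℕ) : ℤ) := by push_cast; omega
          have e1 : max ((m 1 : ℤ)) 1 = ((max (m 1) 1 : ℕ) : ℤ) := by push_cast; omega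
          rw [e0, e1, ← Nat.cast_mul]
          exact_mod_cast hN2

-- ===== Part 6: more integral lemmas, fibb, cube facts =====

lemma vpK_eq_fej (j : ℕ) (hj : 0 < j) (v : ℝ) :
    vpK j v = (j:ℂ)⁻¹ * (fejC (2*j-1) v - fejC (j-1) v) := by
  rw [vpK, fejC, fejC]
  congr 1
  have h1 : 2*j-1+1 = 2*j := by omega
  have h2 : j-1+1 = j := by omega
  rw [h1, h2, eq_sub_iff_add_eq, Finset.sum_Ico_eq_sub _ (by omega : j ≤ 2*j)]
  ring

lemma abs_vpK_le (j : ℕ) (hj : 0 < j) (v : ℝ) :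
    ‖vpK j v‖ ≤ (j:ℝ)⁻¹ * (fejR (2*j-1) v + fejR (j-1) v) := by
  rw [vpK_eq_fej j hj v, norm_mul]
  have h1 : ‖((j:ℂ)⁻¹)‖ = (j:ℝ)⁻¹ := by
    rw [norm_inv]
    simp [Complex.norm_natCast]
  rw [h1]
  refine mul_le_mul_of_nonneg_left ?_ (by positivity)
  calc ‖fejC (2*j-1) v - fejC (j-1) v‖
      ≤ ‖fejC (2*j-1) v‖ + ‖fejC (j-1) v‖ := by
        exact (norm_sub_le _ _)
    _ = fejR (2*j-1) v + fejR (j-1) v := by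
        rw [fejC_eq_ofReal, fejC_eq_ofReal, Complex.norm_real, Complex.norm_real, Real.norm_eq_abs, Real.norm_eq_abs,
          abs_of_nonneg (fejR_nonneg _ _), abs_of_nonneg (fejR_nonneg _ _)]

lemma integral_dirichlet_reflect (l : ℕ) (x : ℝ) :
    ∫ u in Set.Icc (0:ℝ) (2*Real.pi), dirichletK l (x - u) = 2*Real.pi := by
  have hpt : ∀ u : ℝ, dirichletK l (x - u)
      = ∑ k ∈ Finset.Icc (-(l:ℤ)) l, (ek k x) * ek (-k) u := by
    intro u
    rw [dirichletK_eq]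
    exact Finset.sum_congr rfl fun k _ => ek_sub k x u
  simp_rw [hpt]
  rw [MeasureTheory.integral_finset_sum _
    (fun k _ => (show Continuous (fun u => ek k x * ek (-k) u) from continuous_const.mul (ek_cont (-k))).integrableOn_Icc)]
  simp_rw [MeasureTheory.integral_const_mul, integral_ek]
  rw [Finset.sum_eq_single (0:ℤ)]
  · simp [ek_zero]
  · intro b _ hb
    have : ¬((-b : ℤ) = 0) := by omega
    simp [this]
  · intro h
    exact absurd (by simp only [Finset.mem_Icc]; omega) h

lemma integral_fejC_reflect (m : ℕ) (x : ℝ) :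
    ∫ u in Set.Icc (0:ℝ) (2*Real.pi), fejC m (x - u) = 2*Real.pi * (m+1) := by
  have hpt : ∀ u : ℝ, fejC m (x - u) = ∑ l ∈ Finset.range (m+1), dirichletK l (x - u) := fun u => rfl
  simp_rw [hpt]
  rw [MeasureTheory.integral_finset_sum _ (fun l _ => ?_)]
  · simp_rw [integral_dirichlet_reflect]
    rw [Finset.sum_const, Finset.card_range, nsmul_eq_mul]
    push_cast; ring
  · have : Continuous (fun u : ℝ => dirichletK l (x - u)) :=
      ((isPoly1_dirichletK l l le_rfl).reflect x).continuous
    exact this.integrableOn_Icc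

lemma integral_ek_mul_vpK (j : ℕ) (k : ℤ) (hk1 : -(j:ℤ) < k) (hk2 : k < j) (x : ℝ) :
    ∫ u in Set.Icc (0:ℝ) (2*Real.pi), ek k u * vpK j (x - u) = 2*Real.pi * ek k x := by
  have hj : 0 < j := by omega
  have hrep : ∀ u : ℝ, vpK j (x - u) = ∑ m ∈ Finset.Icc (-((2*j-1:ℕ):ℤ)) ((2*j-1:ℕ):ℤ),
      (wcoef j (-m) * ek (-m) x) * ek m u := by
    intro u
    rw [vpK_rep j (x-u), sum_neg_Icc _ (fun m => wcoef j m * ek m (x-u))]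
    refine Finset.sum_congr rfl fun m _ => ?_
    rw [ek_sub, neg_neg]
    ring
  simp_rw [hrep]
  rw [integral_ek_mul_rep (2*j-1) _ k (by simp only [Finset.mem_Icc]; omega)]
  rw [neg_neg, wcoef_one hk1 hk2, one_mul]

lemma fibPoint_mem_cube {n ν : ℕ} (hν : ν ≤ fibb n) : fibPoint n ν ∈ cube 2 := by
  have hb : (0:ℝ) < fibb n := by exact_mod_cast fibb_pos n
  have hpi : (0:ℝ) < 2*Real.pi := by positivity
  constructor <;> intro i <;> fin_cases i <;>
    simp only [fibPoint, Matrix.cons_val_zero, Matrix.cons_val_one, Matrix.head_cons,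
      Pi.zero_apply, Fin.mk_zero, Fin.mk_one, Fin.isValue]
  · positivity
  · have h1 : 0 ≤ Int.fract ((↑(ν * fibb (n - 1)) : ℝ) / fibb n) := Int.fract_nonneg _
    positivity
  · rw [div_le_iff₀ hb]
    have hν' : (ν:ℝ) ≤ (fibb n : ℝ) := by exact_mod_cast hν
    nlinarith
  · have h2 : Int.fract ((↑(ν * fibb (n - 1)) : ℝ) / fibb n) < 1 := Int.fract_lt_one _
    have h1 : 0 ≤ Int.fract ((↑(ν * fibb (n - 1)) : ℝ) / fibb n) := Int.fract_nonneg _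
    nlinarith

lemma cube_nonempty (d : ℕ) : Set.Nonempty (cube d) :=
  ⟨0, Set.mem_Icc.mpr ⟨le_rfl, fun i => by positivity⟩⟩

lemma trigSpace_continuous {d : ℕ} {Q : Finset (Fin d → ℤ)} {u : (Fin d → ℝ) → ℂ}
    (hu : u ∈ trigSpace Q) : Continuous u := by
  induction hu using Submodule.span_induction with
  | mem x hx =>
    obtain ⟨k, _, rfl⟩ := hx
    exact expFun_continuous k
  | zero => exact continuous_const
  | add x y _ _ hx hy => exact hx.add hy
  | smul a x _ hx => exact hx.const_smul a

lemma unifNorm_nonneg {d : ℕ} (g : (Fin d → ℝ) → ℂ) : 0 ≤ unifNorm g :=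
  Real.iSup_nonneg fun x => norm_nonneg _

lemma abs_le_unifNorm {d : ℕ} {g : (Fin d → ℝ) → ℂ} (hg : Continuous g)
    {x : Fin d → ℝ} (hx : x ∈ cube d) : ‖g x‖ ≤ unifNorm g := by
  have hbdd : BddAbove (Set.range fun y : cube d => ‖g ↑y‖) := by
    have hc : IsCompact (cube d) := isCompact_Icc
    have himg : (Set.range fun y : cube d => ‖g ↑y‖)
        = (fun y => ‖g y‖) '' (cube d) := by
      ext r
      constructor
      · rintro ⟨⟨y, hy⟩, rfl⟩; exact ⟨y, hy, rfl⟩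
      · rintro ⟨y, hy, rfl⟩; exact ⟨⟨y, hy⟩, rfl⟩
    rw [himg]
    exact (hc.image (continuous_norm.comp hg)).bddAbove
  exact le_ciSup hbdd ⟨x, hx⟩

lemma unifNorm_le {d : ℕ} (g : (Fin d → ℝ) → ℂ) {C : ℝ}
    (h : ∀ x ∈ cube d, ‖g x‖ ≤ C) : unifNorm g ≤ C := by
  haveI : Nonempty (cube d) := (cube_nonempty d).to_subtype
  exact ciSup_le fun y => h y y.2

-- ===== Part 8: cubature transfer and the two key estimates =====

lemma cubature_sep {n N : ℕ}
    (hc : ∀ g ∈ trigSpace (hyperCross 2 N),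
      (fibb n : ℂ)⁻¹ * ∑ ν ∈ Finset.Icc 1 (fibb n), g (fibPoint n ν) =
        (((2 * Real.pi) ^ 2 : ℝ) : ℂ)⁻¹ * ∫ x in cube 2, g x)
    (m : Fin 2 → ℕ) (g : Fin 2 → ℝ → ℂ) (hg : ∀ i, IsPoly1 (m i) (g i))
    (hN1 : ∀ i, m i ≤ N) (hN2 : max (m 0) 1 * max (m 1) 1 ≤ N) :
    (fibb n : ℂ)⁻¹ * ∑ ν ∈ Finset.Icc 1 (fibb n), ∏ i, g i (fibPoint n ν i)
      = (((2 * Real.pi) ^ 2 : ℝ) : ℂ)⁻¹ * ∏ i, ∫ u in Set.Icc (0:ℝ) (2*Real.pi), g i u := by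
  have h := hc _ (mem_trigSpace_of_sep m g hg hN1 hN2)
  rw [integral_cube_prod g] at h
  exact h

lemma sum_abs_vpKd_le {n N n' : ℕ} (hN : N = 9 * 2^n')
    (hc : ∀ g ∈ trigSpace (hyperCross 2 N),
      (fibb n : ℂ)⁻¹ * ∑ ν ∈ Finset.Icc 1 (fibb n), g (fibPoint n ν) =
        (((2 * Real.pi) ^ 2 : ℝ) : ℂ)⁻¹ * ∫ x in cube 2, g x)
    (s : Fin 2 → ℕ) (hs : s 0 + s 1 = n') (x : Fin 2 → ℝ) :
    (fibb n : ℝ)⁻¹ * ∑ ν ∈ Finset.Icc 1 (fibb n),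
        ‖vpKd (fun i => 2^(s i)) (x - fibPoint n ν)‖ ≤ 9 := by
  set J : Fin 2 → ℕ := fun i => 2^(s i) with hJ
  have hJpos : ∀ i, 0 < J i := fun i => pow_pos (by norm_num) _
  have hJn' : J 0 * J 1 = 2^n' := by rw [hJ]; dsimp only; rw [← pow_add, hs]
  have hJle : ∀ i, J i ≤ 2^n' := by
    intro i
    fin_cases i
    · calc J 0 ≤ J 0 * J 1 := Nat.le_mul_of_pos_right _ (hJpos 1)
        _ = 2^n' := hJn'
    · calc J 1 ≤ J 0 * J 1 := Nat.le_mul_of_pos_left _ (hJpos 0)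
        _ = 2^n' := hJn'
  set gB : Fin 2 → ℝ → ℂ :=
    fun i u => fejC (2*(J i)-1) (x i - u) + fejC ((J i)-1) (x i - u) with hgBdef
  have hgB : ∀ i, IsPoly1 (2*(J i)-1) (gB i) := by
    intro i
    exact ((isPoly1_fejC _).reflect (x i)).add
      (((isPoly1_fejC ((J i)-1)).mono (by have := hJpos i; omega)).reflect (x i))
  have hN1 : ∀ i, 2*(J i)-1 ≤ N := by
    intro i
    have := hJle i
    omega
  have hN2 : max (2*(J 0)-1) 1 * max (2*(J 1)-1) 1 ≤ N := by
    have h0 := hJpos 0; have h1 := hJpos 1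
    have e0 : max (2*(J 0)-1) 1 = 2*(J 0)-1 := by omega
    have e1 : max (2*(J 1)-1) 1 = 2*(J 1)-1 := by omega
    rw [e0, e1, hN, ← hJn']
    calc (2*(J 0)-1) * (2*(J 1)-1) ≤ (2*(J 0)) * (2*(J 1)) :=
          Nat.mul_le_mul (Nat.sub_le _ _) (Nat.sub_le _ _)
      _ = 4 * (J 0 * J 1) := by ring
      _ ≤ 9 * (J 0 * J 1) := Nat.mul_le_mul_right _ (by omega)
  have hcub2 := cubature_sep hc _ gB hgB hN1 hN2
  -- compute the integrals
  have hint : ∀ i, ∫ u in Set.Icc (0:ℝ) (2*Real.pi), gB i u = ((2*Real.pi * (3*(J i)) : ℝ) : ℂ) := by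
    intro i
    have hi1 : IntegrableOn (fun u => fejC (2*(J i)-1) (x i - u)) (Set.Icc (0:ℝ) (2*Real.pi)) :=
      (((isPoly1_fejC _).reflect (x i)).continuous).integrableOn_Icc
    have hi2 : IntegrableOn (fun u => fejC ((J i)-1) (x i - u)) (Set.Icc (0:ℝ) (2*Real.pi)) :=
      (((isPoly1_fejC _).reflect (x i)).continuous).integrableOn_Icc
    rw [hgBdef]
    dsimp only
    rw [MeasureTheory.integral_add hi1 hi2, integral_fejC_reflect, integral_fejC_reflect]
    have := hJpos i
    have c1 : ((2*(J i)-1 : ℕ) : ℂ) = 2*(J i : ℂ) - 1 := by push_cast [Nat.cast_sub (by omega : 1 ≤ 2*(J i))]; ring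
    have c2 : (((J i)-1 : ℕ) : ℂ) = (J i : ℂ) - 1 := by push_cast [Nat.cast_sub (by omega : 1 ≤ J i)]; ring
    rw [c1, c2]
    push_cast
    ring
  -- identify the complex cubature value with a real number
  set R : ℝ := (fibb n : ℝ)⁻¹ * ∑ ν ∈ Finset.Icc 1 (fibb n),
      ((fejR (2*(J 0)-1) (x 0 - fibPoint n ν 0) + fejR ((J 0)-1) (x 0 - fibPoint n ν 0)) *
       (fejR (2*(J 1)-1) (x 1 - fibPoint n ν 1) + fejR ((J 1)-1) (x 1 - fibPoint n ν 1))) with hRdef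
  have hGreal : ∀ ν, (∏ i, gB i (fibPoint n ν i)) =
      (((fejR (2*(J 0)-1) (x 0 - fibPoint n ν 0) + fejR ((J 0)-1) (x 0 - fibPoint n ν 0)) *
        (fejR (2*(J 1)-1) (x 1 - fibPoint n ν 1) + fejR ((J 1)-1) (x 1 - fibPoint n ν 1)) : ℝ) : ℂ) := by
    intro ν
    rw [Fin.prod_univ_two, hgBdef]
    dsimp only
    rw [fejC_eq_ofReal, fejC_eq_ofReal, fejC_eq_ofReal, fejC_eq_ofReal]
    push_cast
    ring
  have hRC : ((R : ℝ) : ℂ) = (fibb n : ℂ)⁻¹ * ∑ ν ∈ Finset.Icc 1 (fibb n), ∏ i, gB i (fibPoint n ν i) := by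
    rw [hRdef]
    push_cast
    rw [Finset.sum_congr rfl (fun ν _ => hGreal ν)]
    push_cast
    ring
  have hRval : R = 9 * (J 0 * J 1 : ℕ) := by
    have hpi : (2*Real.pi)^2 ≠ 0 := by positivity
    have : ((R : ℝ) : ℂ) = ((9 * ((J 0 * J 1 : ℕ) : ℝ) : ℝ) : ℂ) := by
      rw [hRC, hcub2, Fin.prod_univ_two, hint 0, hint 1]
      rw [show ((2*Real.pi*(3*(J 0)) : ℝ) : ℂ) * ((2*Real.pi*(3*(J 1)) : ℝ) : ℂ)
          = ((((2*Real.pi)^2 : ℝ)) : ℂ) * ((9 * ((J 0 * J 1 : ℕ) : ℝ) : ℝ) : ℂ) by push_cast; ring]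
      rw [← mul_assoc]
      rw [inv_mul_cancel₀ (by exact_mod_cast hpi), one_mul]
    exact_mod_cast this
  -- pointwise domination
  have hpt : ∀ ν, ‖vpKd J (x - fibPoint n ν)‖ ≤
      ((J 0 * J 1 : ℕ) : ℝ)⁻¹ *
      ((fejR (2*(J 0)-1) (x 0 - fibPoint n ν 0) + fejR ((J 0)-1) (x 0 - fibPoint n ν 0)) *
       (fejR (2*(J 1)-1) (x 1 - fibPoint n ν 1) + fejR ((J 1)-1) (x 1 - fibPoint n ν 1))) := by
    intro ν
    rw [vpKd, Fin.prod_univ_two, norm_mul]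
    have b0 := abs_vpK_le (J 0) (hJpos 0) ((x - fibPoint n ν) 0)
    have b1 := abs_vpK_le (J 1) (hJpos 1) ((x - fibPoint n ν) 1)
    rw [Pi.sub_apply] at b0 b1
    calc ‖vpK (J 0) ((x - fibPoint n ν) 0)‖ * ‖vpK (J 1) ((x - fibPoint n ν) 1)‖
        ≤ ((J 0 : ℝ)⁻¹ * (fejR (2*(J 0)-1) (x 0 - fibPoint n ν 0) + fejR ((J 0)-1) (x 0 - fibPoint n ν 0))) *
          ((J 1 : ℝ)⁻¹ * (fejR (2*(J 1)-1) (x 1 - fibPoint n ν 1) + fejR ((J 1)-1) (x 1 - fibPoint n ν 1))) := by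
          rw [Pi.sub_apply, Pi.sub_apply]
          exact mul_le_mul b0 b1 (norm_nonneg _)
            (mul_nonneg (inv_nonneg.mpr (Nat.cast_nonneg _))
              (add_nonneg (fejR_nonneg _ _) (fejR_nonneg _ _)))
      _ = ((J 0 * J 1 : ℕ) : ℝ)⁻¹ *
          ((fejR (2*(J 0)-1) (x 0 - fibPoint n ν 0) + fejR ((J 0)-1) (x 0 - fibPoint n ν 0)) *
           (fejR (2*(J 1)-1) (x 1 - fibPoint n ν 1) + fejR ((J 1)-1) (x 1 - fibPoint n ν 1))) := by
          push_cast
          ring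
  -- assemble
  have hbpos : (0:ℝ) < fibb n := by exact_mod_cast fibb_pos n
  have hsum : ∑ ν ∈ Finset.Icc 1 (fibb n), ‖vpKd J (x - fibPoint n ν)‖
      ≤ ((J 0 * J 1 : ℕ) : ℝ)⁻¹ * ∑ ν ∈ Finset.Icc 1 (fibb n),
      ((fejR (2*(J 0)-1) (x 0 - fibPoint n ν 0) + fejR ((J 0)-1) (x 0 - fibPoint n ν 0)) *
       (fejR (2*(J 1)-1) (x 1 - fibPoint n ν 1) + fejR ((J 1)-1) (x 1 - fibPoint n ν 1))) := by
    rw [Finset.mul_sum]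
    exact Finset.sum_le_sum fun ν _ => hpt ν
  have hJJpos : (0:ℝ) < ((J 0 * J 1 : ℕ) : ℝ) := by
    have := Nat.mul_pos (hJpos 0) (hJpos 1)
    exact_mod_cast this
  calc (fibb n : ℝ)⁻¹ * ∑ ν ∈ Finset.Icc 1 (fibb n), ‖vpKd J (x - fibPoint n ν)‖
      ≤ (fibb n : ℝ)⁻¹ * (((J 0 * J 1 : ℕ) : ℝ)⁻¹ * ∑ ν ∈ Finset.Icc 1 (fibb n),
        ((fejR (2*(J 0)-1) (x 0 - fibPoint n ν 0) + fejR ((J 0)-1) (x 0 - fibPoint n ν 0)) *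
         (fejR (2*(J 1)-1) (x 1 - fibPoint n ν 1) + fejR ((J 1)-1) (x 1 - fibPoint n ν 1)))) := by
        exact mul_le_mul_of_nonneg_left hsum (by positivity)
    _ = ((J 0 * J 1 : ℕ) : ℝ)⁻¹ * R := by rw [hRdef]; ring
    _ = 9 := by
        rw [hRval]
        field_simp

-- ===== Part 9: reproduction property =====

lemma fibV_reproduce {n N n' : ℕ} (hN : N = 9 * 2^n')
    (hc : ∀ g ∈ trigSpace (hyperCross 2 N),
      (fibb n : ℂ)⁻¹ * ∑ ν ∈ Finset.Icc 1 (fibb n), g (fibPoint n ν) =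
        (((2 * Real.pi) ^ 2 : ℝ) : ℂ)⁻¹ * ∫ x in cube 2, g x)
    (s : Fin 2 → ℕ) (hs : s 0 + s 1 = n')
    {t : (Fin 2 → ℝ) → ℂ} (ht : t ∈ trigSpace (Rbox s)) (x : Fin 2 → ℝ) :
    fibV n s t x = t x := by
  induction ht using Submodule.span_induction with
  | zero => simp [fibV]
  | add g h _ _ hgx hhx =>
    have : fibV n s (g + h) x = fibV n s g x + fibV n s h x := by
      rw [fibV, fibV, fibV, ← mul_add, ← Finset.sum_add_distrib]
      congr 1
      refine Finset.sum_congr rfl fun ν _ => ?_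
      rw [Pi.add_apply]
      ring
    rw [this, hgx, hhx, Pi.add_apply]
  | smul a g _ hgx =>
    have : fibV n s (a • g) x = a * fibV n s g x := by
      rw [fibV, fibV, Finset.mul_sum, Finset.mul_sum, Finset.mul_sum]
      refine Finset.sum_congr rfl fun ν _ => ?_
      rw [Pi.smul_apply, smul_eq_mul]
      ring
    rw [this, hgx, Pi.smul_apply, smul_eq_mul]
  | mem g hg =>
    obtain ⟨k, hk, rfl⟩ := hg
    have hkmem : ∀ i, -(2^(s i) : ℤ) < k i ∧ k i < 2^(s i) := by
      intro i
      have := (Fintype.mem_piFinset.mp hk) i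
      simpa only [Finset.mem_Ioo] using this
    set J : Fin 2 → ℕ := fun i => 2^(s i) with hJ
    have hJpos : ∀ i, 0 < J i := fun i => pow_pos (by norm_num) _
    have hJn' : J 0 * J 1 = 2^n' := by rw [hJ]; dsimp only; rw [← pow_add, hs]
    set gg : Fin 2 → ℝ → ℂ := fun i u => ek (k i) u * vpK (J i) (x i - u) with hggdef
    have hgg : ∀ i, IsPoly1 ((J i - 1) + (2*(J i) - 1)) (gg i) := by
      intro i
      refine IsPoly1.mulEk (((isPoly1_vpK (J i))).reflect (x i)) ?_
      have h1 := (hkmem i).1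
      have h2 := (hkmem i).2
      have hJc : ((J i : ℕ) : ℤ) = (2:ℤ)^(s i) := by rw [hJ]; push_cast; ring
      simp only [Finset.mem_Icc]
      have := hJpos i
      omega
    have hmi : ∀ i, (J i - 1) + (2*(J i) - 1) = 3*(J i) - 2 := by
      intro i; have := hJpos i; omega
    have hN1 : ∀ i, (J i - 1) + (2*(J i) - 1) ≤ N := by
      intro i
      have h0 := hJpos 0; have h1 := hJpos 1
      have hle : J i ≤ J 0 * J 1 := by
        fin_cases i
        · exact Nat.le_mul_of_pos_right _ h1
        · exact Nat.le_mul_of_pos_left _ h0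
      rw [hN, ← hJn']
      have := hJpos i
      omega
    have hN2 : max ((J 0 - 1) + (2*(J 0) - 1)) 1 * max ((J 1 - 1) + (2*(J 1) - 1)) 1 ≤ N := by
      have h0 := hJpos 0; have h1 := hJpos 1
      have e0 : max ((J 0 - 1) + (2*(J 0) - 1)) 1 ≤ 3 * (J 0) := by omega
      have e1 : max ((J 1 - 1) + (2*(J 1) - 1)) 1 ≤ 3 * (J 1) := by omega
      calc max ((J 0 - 1) + (2*(J 0) - 1)) 1 * max ((J 1 - 1) + (2*(J 1) - 1)) 1
          ≤ (3 * J 0) * (3 * J 1) := Nat.mul_le_mul e0 e1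
        _ = 9 * (J 0 * J 1) := by ring
        _ = N := by rw [hJn', hN]
    have hterm : ∀ ν, expFun k (fibPoint n ν) * vpKd J (x - fibPoint n ν)
        = ∏ i, gg i (fibPoint n ν i) := by
      intro ν
      rw [expFun_eq_prod, vpKd, Fin.prod_univ_two, Fin.prod_univ_two, hggdef]
      dsimp only
      rw [Pi.sub_apply, Pi.sub_apply]
      ring
    have hcub2 := cubature_sep hc _ gg hgg hN1 hN2
    have hint : ∀ i, ∫ u in Set.Icc (0:ℝ) (2*Real.pi), gg i u = 2*Real.pi * ek (k i) (x i) := by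
      intro i
      rw [hggdef]
      dsimp only
      exact integral_ek_mul_vpK (J i) (k i) (by exact_mod_cast (hkmem i).1) (by exact_mod_cast (hkmem i).2) (x i)
    have hfin : fibV n s (expFun k) x
        = (((2 * Real.pi) ^ 2 : ℝ) : ℂ)⁻¹ * ∏ i, ∫ u in Set.Icc (0:ℝ) (2*Real.pi), gg i u := by
      rw [fibV, ← hcub2]
      congr 1
      exact Finset.sum_congr rfl fun ν _ => hterm ν
    rw [hfin, Fin.prod_univ_two, hint 0, hint 1]
    rw [expFun_eq_prod]
    have hpi : (((2 * Real.pi) ^ 2 : ℝ) : ℂ) ≠ 0 := by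
      have : (2*Real.pi)^2 ≠ 0 := by positivity
      exact_mod_cast this
    have hpi2 : (Real.pi : ℂ) ≠ 0 := by exact_mod_cast Real.pi_ne_zero
    field_simp
    push_cast
    ring

-- ===== Part 10: Lebesgue inequality for fixed s =====

lemma fibV_sub_apply (n : ℕ) (s : Fin 2 → ℕ) (g h : (Fin 2 → ℝ) → ℂ) (x : Fin 2 → ℝ) :
    fibV n s (g - h) x = fibV n s g x - fibV n s h x := by
  rw [fibV, fibV, fibV, ← mul_sub, ← Finset.sum_sub_distrib]
  congr 1
  refine Finset.sum_congr rfl fun ν _ => ?_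
  rw [Pi.sub_apply]
  ring

lemma key_ineq {n N n' : ℕ} (hN : N = 9 * 2^n')
    (hc : ∀ g ∈ trigSpace (hyperCross 2 N),
      (fibb n : ℂ)⁻¹ * ∑ ν ∈ Finset.Icc 1 (fibb n), g (fibPoint n ν) =
        (((2 * Real.pi) ^ 2 : ℝ) : ℂ)⁻¹ * ∫ x in cube 2, g x)
    (s : Fin 2 → ℕ) (hs : s 0 + s 1 = n')
    (f : (Fin 2 → ℝ) → ℂ) (hf : Continuous f)
    {t : (Fin 2 → ℝ) → ℂ} (ht : t ∈ trigSpace (Rbox s)) :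
    unifNorm (f - fibV n s f) ≤ 10 * unifNorm (f - t) := by
  have hft : Continuous (f - t) := hf.sub (trigSpace_continuous ht)
  set C := unifNorm (f - t) with hCdef
  have hC0 : 0 ≤ C := unifNorm_nonneg _
  refine unifNorm_le _ fun x hx => ?_
  have h2 : ‖(f - t) x‖ ≤ C := abs_le_unifNorm hft hx
  have h3 : t x - fibV n s f x = fibV n s (t - f) x := by
    rw [fibV_sub_apply, fibV_reproduce hN hc s hs ht x]
  have h4 : ‖fibV n s (t - f) x‖ ≤ 9 * C := by
    rw [fibV, norm_mul]
    have habs_inv : ‖((fibb n : ℂ)⁻¹)‖ = (fibb n : ℝ)⁻¹ := by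
      rw [norm_inv]
      simp [Complex.norm_natCast]
    rw [habs_inv]
    have hstep : ‖∑ ν ∈ Finset.Icc 1 (fibb n),
        (t - f) (fibPoint n ν) * vpKd (fun i => 2 ^ s i) (x - fibPoint n ν)‖
        ≤ ∑ ν ∈ Finset.Icc 1 (fibb n),
          C * ‖vpKd (fun i => 2 ^ s i) (x - fibPoint n ν)‖ := by
      refine le_trans (norm_sum_le _ _) ?_
      refine Finset.sum_le_sum fun ν hν => ?_
      rw [norm_mul]
      refine mul_le_mul_of_nonneg_right ?_ (norm_nonneg _)
      have hmem : fibPoint n ν ∈ cube 2 :=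
        fibPoint_mem_cube (Finset.mem_Icc.mp hν).2
      have : ‖(t - f) (fibPoint n ν)‖ = ‖(f - t) (fibPoint n ν)‖ := by
        rw [Pi.sub_apply, Pi.sub_apply, norm_sub_rev]
      rw [this]
      exact abs_le_unifNorm hft hmem
    have hb0 : (0:ℝ) ≤ (fibb n : ℝ)⁻¹ := by positivity
    calc (fibb n : ℝ)⁻¹ * ‖∑ ν ∈ Finset.Icc 1 (fibb n),
        (t - f) (fibPoint n ν) * vpKd (fun i => 2 ^ s i) (x - fibPoint n ν)‖
        ≤ (fibb n : ℝ)⁻¹ * ∑ ν ∈ Finset.Icc 1 (fibb n),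
          C * ‖vpKd (fun i => 2 ^ s i) (x - fibPoint n ν)‖ :=
          mul_le_mul_of_nonneg_left hstep hb0
      _ = C * ((fibb n : ℝ)⁻¹ * ∑ ν ∈ Finset.Icc 1 (fibb n),
          ‖vpKd (fun i => 2 ^ s i) (x - fibPoint n ν)‖) := by
          rw [← Finset.mul_sum]
          ring
      _ ≤ C * 9 := by
          refine mul_le_mul_of_nonneg_left ?_ hC0
          exact sum_abs_vpKd_le hN hc s hs x
      _ = 9 * C := by ring
  have h1 : ‖(f - fibV n s f) x‖ ≤ ‖(f - t) x‖
      + ‖t x - fibV n s f x‖ := by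
    rw [Pi.sub_apply]
    have hdec : f x - fibV n s f x = (f x - t x) + (t x - fibV n s f x) := by ring
    rw [hdec]
    refine le_trans (norm_add_le _ _) ?_
    rw [Pi.sub_apply]
  rw [h3] at h1
  calc ‖(f - fibV n s f) x‖ ≤ C + 9 * C := by
        refine le_trans h1 ?_
        exact add_le_add h2 h4
    _ = 10 * C := by ring

-- ===== Part 11: degenerate case and main theorem =====

lemma no_small_n (γ : ℝ)
    (hcub : ∀ n : ℕ, 2 < n → ∀ N : ℕ, (N : ℝ) ≤ γ * fibb n →
      ∀ f ∈ trigSpace (hyperCross 2 N),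
        (fibb n : ℂ)⁻¹ * ∑ ν ∈ Finset.Icc 1 (fibb n), f (fibPoint n ν) =
          (((2 * Real.pi) ^ 2 : ℝ) : ℂ)⁻¹ * ∫ x in cube 2, f x)
    (hγ : (3:ℝ) ≤ γ * fibb 3) : False := by
  have hfb3 : fibb 3 = 3 := rfl
  have hmem : expFun ![3,0] ∈ trigSpace (hyperCross 2 3) := by
    refine Submodule.subset_span (Set.mem_image_of_mem _ ?_)
    show (![3,0] : Fin 2 → ℤ) ∈ (hyperCross 2 3 : Set _)
    simp only [Finset.mem_coe, hyperCross, Finset.mem_filter, Fintype.mem_piFinset]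
    constructor
    · intro j
      fin_cases j <;> simp only [Matrix.cons_val_zero, Matrix.cons_val_one, Matrix.head_cons,
        Fin.mk_zero, Fin.mk_one, Fin.isValue, Finset.mem_Icc] <;> omega
    · rw [Fin.prod_univ_two]
      simp only [Matrix.cons_val_zero, Matrix.cons_val_one, Matrix.head_cons]
      decide
  have h := hcub 3 (by norm_num) 3 hγ _ hmem
  have hterm : ∀ ν ∈ Finset.Icc 1 (fibb 3), expFun ![3,0] (fibPoint 3 ν) = 1 := by
    intro ν _
    rw [expFun_eq_prod]
    have h1 : (![3,0] : Fin 2 → ℤ) 0 = 3 := rfl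
    have h2 : (![3,0] : Fin 2 → ℤ) 1 = 0 := rfl
    rw [h1, h2, ek_zero, mul_one]
    have h0 : fibPoint 3 ν 0 = 2 * Real.pi * ν / ((3:ℕ):ℝ) := rfl
    rw [h0, ek]
    have hrw : Complex.I * ((3:ℤ):ℂ) * ((2*Real.pi*ν/((3:ℕ):ℝ) : ℝ) : ℂ)
        = ((ν:ℤ):ℂ) * (2*Real.pi*Complex.I) := by
      have h3 : ((3:ℕ):ℂ) ≠ 0 := by norm_num
      push_cast
      field_simp
    rw [hrw, Complex.exp_int_mul_two_pi_mul_I]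
  rw [Finset.sum_congr rfl hterm, Finset.sum_const] at h
  have hint : ∫ x in cube 2, expFun ![3,0] x = 0 := by
    have hfun : (expFun ![3,0] : (Fin 2 → ℝ) → ℂ)
        = fun x : Fin 2 → ℝ => ∏ i, (![ek 3, ek 0] : Fin 2 → ℝ → ℂ) i (x i) := by
      funext y
      rw [expFun_eq_prod, Fin.prod_univ_two]
      rfl
    rw [hfun, integral_cube_prod, Fin.prod_univ_two]
    have hv0 : (![ek 3, ek 0] : Fin 2 → ℝ → ℂ) 0 = ek 3 := rfl
    rw [hv0, integral_ek]
    norm_num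
  rw [hint, mul_zero, hfb3] at h
  norm_num at h

/-- Lebesgue-type inequality for the universal Fibonacci recovery
algorithm `V^n` (Proposition FP1). -/
theorem stmt11 (γ : ℝ) (hγ : 0 < γ)
    (hcub : ∀ n : ℕ, 2 < n → ∀ N : ℕ, (N : ℝ) ≤ γ * fibb n →
      ∀ f ∈ trigSpace (hyperCross 2 N),
        (fibb n : ℂ)⁻¹ * ∑ ν ∈ Finset.Icc 1 (fibb n), f (fibPoint n ν) =
          (((2 * Real.pi) ^ 2 : ℝ) : ℂ)⁻¹ * ∫ x in cube 2, f x)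
    (n n' : ℕ)
    (hn' : IsGreatest {k : ℕ | (2 : ℝ) ^ k ≤ γ * fibb n / 9} n')
    (f : (Fin 2 → ℝ) → ℂ) (hf : Continuous f) (hper : Periodic2Pi f) :
    (⨅ s : {s : Fin 2 → ℕ // (∑ j, s j) = n'}, unifNorm (f - fibV n s f)) ≤
      10 * ⨅ s : {s : Fin 2 → ℕ // (∑ j, s j) = n'}, distT f (Rbox (s : Fin 2 → ℕ)) := by
  have h2n' : (1:ℝ) ≤ 2^n' := one_le_pow₀ (by norm_num)
  have hgb9 : (9:ℝ) ≤ γ * fibb n := by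
    have h := hn'.1
    simp only [Set.mem_setOf_eq] at h
    nlinarith
  have hn2 : 2 < n := by
    by_contra hcon
    push_neg at hcon
    have hfb : fibb n ≤ 2 := by
      interval_cases n <;> simp [fibb]
    have hfbn : (fibb n : ℝ) ≤ 2 := by exact_mod_cast hfb
    have hγ45 : (9:ℝ)/2 ≤ γ := by
      have hfpos : (0:ℝ) < fibb n := by exact_mod_cast fibb_pos n
      nlinarith
    refine no_small_n γ hcub ?_
    have h3 : (fibb 3 : ℝ) = 3 := by norm_num [fibb]
    rw [h3]
    nlinarith
  set N := 9 * 2^n' with hNdef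
  have hNle : (N : ℝ) ≤ γ * fibb n := by
    have h := hn'.1
    simp only [Set.mem_setOf_eq] at h
    rw [hNdef]
    push_cast
    nlinarith
  have hc := hcub n hn2 N hNle
  haveI : Nonempty {s : Fin 2 → ℕ // (∑ j, s j) = n'} :=
    ⟨⟨![n', 0], by rw [Fin.sum_univ_two]; simp⟩⟩
  have hsum2 : ∀ (s : {s : Fin 2 → ℕ // (∑ j, s j) = n'}),
      (s : Fin 2 → ℕ) 0 + (s : Fin 2 → ℕ) 1 = n' := by
    intro s
    have := s.2
    rwa [Fin.sum_univ_two] at this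
  have hkey : ∀ (s : {s : Fin 2 → ℕ // (∑ j, s j) = n'}),
      unifNorm (f - fibV n (s : Fin 2 → ℕ) f) ≤ 10 * distT f (Rbox (s : Fin 2 → ℕ)) := by
    intro s
    have hper_u : ∀ u : trigSpace (Rbox (s : Fin 2 → ℕ)),
        unifNorm (f - fibV n (s : Fin 2 → ℕ) f) ≤ 10 * unifNorm (f - (u : (Fin 2 → ℝ) → ℂ)) :=
      fun u => key_ineq hNdef hc _ (hsum2 s) f hf u.2
    rw [distT]
    haveI : Nonempty (trigSpace (Rbox (s : Fin 2 → ℕ))) := ⟨0⟩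
    have hq : unifNorm (f - fibV n (s : Fin 2 → ℕ) f) / 10
        ≤ ⨅ u : trigSpace (Rbox (s : Fin 2 → ℕ)), unifNorm (f - (u : (Fin 2 → ℝ) → ℂ)) := by
      refine le_ciInf fun u => ?_
      linarith [hper_u u]
    linarith [hq]
  have hbdd : BddBelow (Set.range fun s : {s : Fin 2 → ℕ // (∑ j, s j) = n'} =>
      unifNorm (f - fibV n (s : Fin 2 → ℕ) f)) := by
    refine ⟨0, ?_⟩
    rintro r ⟨s, rfl⟩
    exact unifNorm_nonneg _
  have h5 : ∀ (s : {s : Fin 2 → ℕ // (∑ j, s j) = n'}),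
      (⨅ s' : {s : Fin 2 → ℕ // (∑ j, s j) = n'}, unifNorm (f - fibV n (s' : Fin 2 → ℕ) f))
        ≤ 10 * distT f (Rbox (s : Fin 2 → ℕ)) :=
    fun s => le_trans (ciInf_le hbdd s) (hkey s)
  have h6 : (⨅ s' : {s : Fin 2 → ℕ // (∑ j, s j) = n'}, unifNorm (f - fibV n (s' : Fin 2 → ℕ) f)) / 10
      ≤ ⨅ s : {s : Fin 2 → ℕ // (∑ j, s j) = n'}, distT f (Rbox (s : Fin 2 → ℕ)) := by
    refine le_ciInf fun s => ?_
    linarith [h5 s]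
  linarith [h6]
end
end
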